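/- arXiv:1309.1961 — 8 statements merged into one kernel-verified Lean document; each statement's English description precedes it below -/
import Mathlib

section
/- If G is a connected bipartite graph that has no star cutset and G has a 1-join, then G is a cycle of length 4. -/
open SimpleGraph

universe u

variable {V : Type u}

/-- Removing the vertex set `S` from `G` leaves a disconnected (or empty) graph. -/
def RemoveDisconnects (G : SimpleGraph V) (S : Set V) : Prop :=
  ¬ (G.induce (Sᶜ)).Connected

/-- `S` is a star cutset of `G`: `S = {x} ∪ R` with `R ⊆ N(x)`, and removing `S`
disconnects `G`. -/
def IsStarCutset (G : SimpleGraph V) (S : Set V) : Prop :=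
  (∃ x ∈ S, ∀ y ∈ S, y = x ∨ G.Adj x y) ∧ RemoveDisconnects G S

def NoStarCutset (G : SimpleGraph V) : Prop :=
  ∀ S : Set V, ¬ IsStarCutset G S

/-- `G` is bipartite. -/
def Bipartite (G : SimpleGraph V) : Prop := G.Colorable 2

/-- Degree of a vertex, as the cardinality of its neighbor set. -/
noncomputable def deg (G : SimpleGraph V) (v : V) : ℕ := (G.neighborSet v).ncard

/-- A hole: an induced (chordless) cycle of length at least 4. -/
def IsHole (G : SimpleGraph V) {v : V} (c : G.Walk v v) : Prop :=
  c.IsCycle ∧ 4 ≤ c.length ∧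
    ∀ a b : V, a ∈ c.support → b ∈ c.support → G.Adj a b → s(a, b) ∈ c.edges

/-- `G` is balanceable: there is a signing of the edges with `+1, -1` such that
every hole has weight `≡ 0 (mod 4)`. -/
def Balanceable (G : SimpleGraph V) : Prop :=
  ∃ w : Sym2 V → ℤ, (∀ e ∈ G.edgeSet, w e = 1 ∨ w e = -1) ∧
    ∀ (v : V) (c : G.Walk v v), IsHole G c → ((c.edges.map w).sum) % 4 = 0

/-- `G` is balanced: every hole has length `≡ 0 (mod 4)`. -/
def BalancedGraph (G : SimpleGraph V) : Prop :=
  ∀ (v : V) (c : G.Walk v v), IsHole G c → c.length % 4 = 0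

/-- `G` has no hole of length 4. -/
def FourHoleFree (G : SimpleGraph V) : Prop :=
  ∀ (v : V) (c : G.Walk v v), IsHole G c → c.length ≠ 4

def LinearBalanceable (G : SimpleGraph V) : Prop :=
  Balanceable G ∧ FourHoleFree G

/-- `G` is 2-connected: at least 3 vertices and deleting any vertex leaves it connected. -/
def TwoConnected (G : SimpleGraph V) : Prop :=
  3 ≤ Nat.card V ∧ ∀ v : V, (G.induce ({v}ᶜ : Set V)).Connected

/-- `e` is a chord of the cycle `c`. -/
def IsChord (G : SimpleGraph V) {x : V} (c : G.Walk x x) (e : Sym2 V) : Prop :=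
  e ∈ G.edgeSet ∧ e ∉ c.edges ∧ ∀ v ∈ e, v ∈ c.support

/-- `e` is the unique chord of the cycle `c`. -/
def IsUniqueChord (G : SimpleGraph V) {x : V} (c : G.Walk x x) (e : Sym2 V) : Prop :=
  c.IsCycle ∧ IsChord G c e ∧ ∀ f, IsChord G c f → f = e

/-- A pair of twins: distinct vertices with the same neighborhood, of size at least 3. -/
def IsTwinPair (G : SimpleGraph V) (u v : V) : Prop :=
  u ≠ v ∧ G.neighborSet u = G.neighborSet v ∧ 3 ≤ (G.neighborSet u).ncard

/-- `v` is a cut vertex: two vertices distinct from `v` are connected in `G` but not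
in `G - v`. -/
def IsCutVertex (G : SimpleGraph V) (v : V) : Prop :=
  ∃ (x y : V) (hx : x ∈ ({v}ᶜ : Set V)) (hy : y ∈ ({v}ᶜ : Set V)),
    G.Reachable x y ∧ ¬ (G.induce ({v}ᶜ : Set V)).Reachable ⟨x, hx⟩ ⟨y, hy⟩

/-- The graph `R₁₀`: the 10-cycle `x₁x₂…x₁₀x₁` together with the chords `xᵢx_{i+5}`. -/
def R10 : SimpleGraph (ZMod 10) :=
  SimpleGraph.fromRel (fun i j => j = i + 1 ∨ j = i + 5)

/-- `H` is a chordless path (as a graph): some chordless Hamiltonian path carries all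
of its edges. -/
def IsChordlessPathGraph {W : Type*} (H : SimpleGraph W) : Prop :=
  ∃ (u v : W) (p : H.Walk u v), p.IsPath ∧ (∀ w, w ∈ p.support) ∧
    ∀ e ∈ H.edgeSet, e ∈ p.edges

/-- `(X₁, X₂, A₁, A₂, B₁, B₂)` is a split of a 2-join of `G`. -/
structure TwoJoinSplit (G : SimpleGraph V) (X1 X2 A1 A2 B1 B2 : Set V) : Prop where
  cover : ∀ v, v ∈ X1 ∨ v ∈ X2
  disj : Disjoint X1 X2
  A1sub : A1 ⊆ X1
  B1sub : B1 ⊆ X1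
  A2sub : A2 ⊆ X2
  B2sub : B2 ⊆ X2
  A1B1disj : Disjoint A1 B1
  A2B2disj : Disjoint A2 B2
  A1ne : A1.Nonempty
  B1ne : B1.Nonempty
  A2ne : A2.Nonempty
  B2ne : B2.Nonempty
  adjA : ∀ a1 ∈ A1, ∀ a2 ∈ A2, G.Adj a1 a2
  adjB : ∀ b1 ∈ B1, ∀ b2 ∈ B2, G.Adj b1 b2
  noOther : ∀ x1 ∈ X1, ∀ x2 ∈ X2, G.Adj x1 x2 →
    (x1 ∈ A1 ∧ x2 ∈ A2) ∨ (x1 ∈ B1 ∧ x2 ∈ B2)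
  path1 : ∃ a b : X1, (a : V) ∈ A1 ∧ (b : V) ∈ B1 ∧ (G.induce X1).Reachable a b
  path2 : ∃ a b : X2, (a : V) ∈ A2 ∧ (b : V) ∈ B2 ∧ (G.induce X2).Reachable a b
  notPath1 : A1.ncard = 1 → B1.ncard = 1 → ¬ IsChordlessPathGraph (G.induce X1)
  notPath2 : A2.ncard = 1 → B2.ncard = 1 → ¬ IsChordlessPathGraph (G.induce X2)

/-- `(X₁, X₂, A₁, …, A₆)` is a split of a 6-join of `G`. -/
structure SixJoinSplit (G : SimpleGraph V) (X1 X2 A1 A2 A3 A4 A5 A6 : Set V) : Prop where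
  cover : ∀ v, v ∈ X1 ∨ v ∈ X2
  disj : Disjoint X1 X2
  sub1 : A1 ⊆ X1
  sub3 : A3 ⊆ X1
  sub5 : A5 ⊆ X1
  sub2 : A2 ⊆ X2
  sub4 : A4 ⊆ X2
  sub6 : A6 ⊆ X2
  disj13 : Disjoint A1 A3
  disj15 : Disjoint A1 A5
  disj35 : Disjoint A3 A5
  disj24 : Disjoint A2 A4
  disj26 : Disjoint A2 A6
  disj46 : Disjoint A4 A6
  ne1 : A1.Nonempty
  ne2 : A2.Nonempty
  ne3 : A3.Nonempty
  ne4 : A4.Nonempty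
  ne5 : A5.Nonempty
  ne6 : A6.Nonempty
  adj12 : ∀ a ∈ A1, ∀ b ∈ A2, G.Adj a b
  adj23 : ∀ a ∈ A2, ∀ b ∈ A3, G.Adj a b
  adj34 : ∀ a ∈ A3, ∀ b ∈ A4, G.Adj a b
  adj45 : ∀ a ∈ A4, ∀ b ∈ A5, G.Adj a b
  adj56 : ∀ a ∈ A5, ∀ b ∈ A6, G.Adj a b
  adj61 : ∀ a ∈ A6, ∀ b ∈ A1, G.Adj a b
  noOther : ∀ x ∈ X1, ∀ y ∈ X2, G.Adj x y →
    (x ∈ A1 ∧ y ∈ A2) ∨ (x ∈ A1 ∧ y ∈ A6) ∨ (x ∈ A3 ∧ y ∈ A2) ∨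
    (x ∈ A3 ∧ y ∈ A4) ∨ (x ∈ A5 ∧ y ∈ A4) ∨ (x ∈ A5 ∧ y ∈ A6)
  card1 : 4 ≤ X1.ncard
  card2 : 4 ≤ X2.ncard

/-- `G` has a 1-join. -/
def HasOneJoin (G : SimpleGraph V) : Prop :=
  ∃ X Y A B : Set V, (∀ v, v ∈ X ∨ v ∈ Y) ∧ Disjoint X Y ∧
    X.Nontrivial ∧ Y.Nontrivial ∧
    A.Nonempty ∧ B.Nonempty ∧ A ⊆ X ∧ B ⊆ Y ∧
    (∀ a ∈ A, ∀ b ∈ B, G.Adj a b) ∧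
    (∀ x ∈ X, ∀ y ∈ Y, G.Adj x y → x ∈ A ∧ y ∈ B)

private lemma walk_inv {W : Type*} {G : SimpleGraph W} {P : W → Prop}
    (h : ∀ u v, G.Adj u v → P u → P v) : ∀ {u v : W}, G.Walk u v → P u → P v := by
  intro u v w
  induction w with
  | nil => exact id
  | cons ha _ ih => exact fun hu => ih (h _ _ ha hu)

private lemma walk_eq {W : Type*} {G : SimpleGraph W} (h : ∀ u v, ¬ G.Adj u v)
    {u v : W} (w : G.Walk u v) : u = v := by
  cases w with
  | nil => rfl
  | cons ha _ => exact absurd ha (h _ _)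

/-- From the 1-join and no star cutset: the far side `Y` equals `B`. -/
private lemma side_full {V : Type*} {G : SimpleGraph V}
    (hstar : ∀ S : Set V, ¬ ((∃ x ∈ S, ∀ y ∈ S, y = x ∨ G.Adj x y) ∧ ¬ (G.induce (Sᶜ)).Connected))
    {X Y A B : Set V} (hcov : ∀ v, v ∈ X ∨ v ∈ Y) (hdisj : Disjoint X Y)
    (hXnt : X.Nontrivial) (hAX : A ⊆ X) (hBY : B ⊆ Y)
    (hAB : ∀ a ∈ A, ∀ b ∈ B, G.Adj a b)
    (honly : ∀ x ∈ X, ∀ y ∈ Y, G.Adj x y → x ∈ A ∧ y ∈ B)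
    (hAne : A.Nonempty) : Y ⊆ B := by
  intro y hy
  by_contra hyB
  obtain ⟨a, ha⟩ := hAne
  obtain ⟨x, hxX, hxa⟩ : ∃ x, x ∈ X ∧ x ≠ a := by
    obtain ⟨x1, hx1, x2, hx2, hne⟩ := hXnt
    rcases eq_or_ne x1 a with rfl | h
    · exact ⟨x2, hx2, hne.symm⟩
    · exact ⟨x1, hx1, h⟩
  apply hstar (insert a B)
  refine ⟨⟨a, Set.mem_insert _ _, ?_⟩, ?_⟩
  · rintro z (rfl | hz)
    · exact Or.inl rfl
    · exact Or.inr (hAB a ha z hz)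
  · intro hc
    have hxc : x ∈ (insert a B : Set V)ᶜ := by
      simp only [Set.mem_compl_iff, Set.mem_insert_iff, not_or]
      exact ⟨hxa, fun hb => Set.disjoint_left.mp hdisj hxX (hBY hb)⟩
    have hyc : y ∈ (insert a B : Set V)ᶜ := by
      simp only [Set.mem_compl_iff, Set.mem_insert_iff, not_or]
      refine ⟨?_, hyB⟩
      rintro rfl
      exact Set.disjoint_left.mp hdisj (hAX ha) hy
    obtain ⟨w⟩ := hc.preconnected ⟨x, hxc⟩ ⟨y, hyc⟩
    have hinv : (y : V) ∈ X := by
      refine walk_inv (P := fun u : ((insert a B : Set V)ᶜ : Set V) => (u : V) ∈ X)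
        ?_ w hxX
      rintro ⟨u, hu⟩ ⟨v, hv⟩ hadj huX
      have hadj' : G.Adj u v := by simpa using hadj
      by_contra hvX
      have hvY : v ∈ Y := (hcov v).resolve_left hvX
      have hvB := (honly u huX v hvY hadj').2
      simp only [Set.mem_compl_iff, Set.mem_insert_iff, not_or] at hv
      exact hv.2 hvB
    exact Set.disjoint_left.mp hdisj hinv hy

/-- In a complete bipartite situation with no star cutset, each side has at most 2
vertices. -/
private lemma side_small {V : Type*} {G : SimpleGraph V}
    (hstar : ∀ S : Set V, ¬ ((∃ x ∈ S, ∀ y ∈ S, y = x ∨ G.Adj x y) ∧ ¬ (G.induce (Sᶜ)).Connected))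
    {P Q : Set V} (hcov : ∀ v, v ∈ P ∨ v ∈ Q) (hdisj : Disjoint P Q)
    (hadjPQ : ∀ p ∈ P, ∀ q ∈ Q, G.Adj p q)
    (hind : ∀ p1 ∈ P, ∀ p2 ∈ P, ¬ G.Adj p1 p2)
    {a : V} (ha : a ∈ P) {u : V} (hu : u ∈ P) {v : V} (hv : v ∈ P)
    (hua : u ≠ a) (hva : v ≠ a) : u = v := by
  by_contra huv
  apply hstar (insert a Q)
  refine ⟨⟨a, Set.mem_insert _ _, ?_⟩, ?_⟩
  · rintro z (rfl | hz)
    · exact Or.inl rfl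
    · exact Or.inr (hadjPQ a ha z hz)
  · intro hc
    have hmem : ∀ w ∈ P, w ≠ a → w ∈ (insert a Q : Set V)ᶜ := by
      intro w hw hwa
      simp only [Set.mem_compl_iff, Set.mem_insert_iff, not_or]
      exact ⟨hwa, fun h => Set.disjoint_left.mp hdisj hw h⟩
    obtain ⟨w⟩ := hc.preconnected ⟨u, hmem u hu hua⟩ ⟨v, hmem v hv hva⟩
    have := walk_eq (G := G.induce ((insert a Q : Set V)ᶜ)) ?_ w
    · exact huv (congrArg Subtype.val this)
    · rintro ⟨p, hp⟩ ⟨q, hq⟩ hadj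
      have hadj' : G.Adj p q := by simpa using hadj
      simp only [Set.mem_compl_iff, Set.mem_insert_iff, not_or] at hp hq
      exact hind p ((hcov p).resolve_right hp.2) q ((hcov q).resolve_right hq.2) hadj'

/-- a connected bipartite graph with no star cutset that has a 1-join
is a cycle of length 4. -/
theorem stmt0 {V : Type u} [Fintype V] (G : SimpleGraph V)
    (hconn : G.Connected) (hbip : Bipartite G)
    (hstar : NoStarCutset G) (hjoin : HasOneJoin G) :
    ∃ (v : V) (c : G.Walk v v), c.IsCycle ∧ c.length = 4 ∧
      (∀ w : V, w ∈ c.support) ∧ (∀ e ∈ G.edgeSet, e ∈ c.edges) := by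
  obtain ⟨X, Y, A, B, hcov, hdisj, hXnt, hYnt, hAne, hBne, hAX, hBY, hAB, honly⟩ := hjoin
  have hstar' : ∀ S : Set V, ¬ ((∃ x ∈ S, ∀ y ∈ S, y = x ∨ G.Adj x y) ∧
      ¬ (G.induce (Sᶜ)).Connected) := fun S h => hstar S h
  -- Step 1: Y = B and X = A
  have hYB : Y ⊆ B := side_full hstar' hcov hdisj hXnt hAX hBY hAB honly hAne
  have hXA : X ⊆ A := by
    refine side_full hstar' (fun v => (hcov v).symm) hdisj.symm hYnt hBY hAX
      (fun b hb a ha => (hAB a ha b hb).symm)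
      (fun y hy x hx hadj => ⟨(honly x hx y hy hadj.symm).2, (honly x hx y hy hadj.symm).1⟩)
      hBne
  -- Step 2: no edges within X or within Y (bipartite, triangles)
  obtain ⟨C⟩ := hbip
  have htri : ∀ p q r : V, G.Adj p q → G.Adj p r → G.Adj q r → False := by
    intro p q r h1 h2 h3
    have e1 : (C p).val ≠ (C q).val := fun h => C.valid h1 (Fin.val_injective h)
    have e2 : (C p).val ≠ (C r).val := fun h => C.valid h2 (Fin.val_injective h)
    have e3 : (C q).val ≠ (C r).val := fun h => C.valid h3 (Fin.val_injective h)
    have := (C p).2; have := (C q).2; have := (C r).2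
    omega
  have hXind : ∀ p ∈ X, ∀ q ∈ X, ¬ G.Adj p q := by
    intro p hp q hq hadj
    obtain ⟨b, hb⟩ := hBne
    exact htri p q b hadj (hAB p (hXA hp) b hb) (hAB q (hXA hq) b hb)
  have hYind : ∀ p ∈ Y, ∀ q ∈ Y, ¬ G.Adj p q := by
    intro p hp q hq hadj
    obtain ⟨a, ha⟩ := hAne
    exact htri p q a hadj (hAB a ha p (hYB hp)).symm (hAB a ha q (hYB hq)).symm
  -- adjacency across
  have hadjXY : ∀ x ∈ X, ∀ y ∈ Y, G.Adj x y := fun x hx y hy => hAB x (hXA hx) y (hYB hy)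
  -- Step 3: each side has exactly 2 vertices
  obtain ⟨x1, hx1, x2, hx2, hx12⟩ := hXnt
  obtain ⟨y1, hy1, y2, hy2, hy12⟩ := hYnt
  have hXeq : ∀ x ∈ X, x = x1 ∨ x = x2 := by
    intro x hx
    by_cases h : x = x1
    · exact Or.inl h
    · exact Or.inr (side_small hstar' hcov hdisj hadjXY hXind hx1 hx hx2 h hx12.symm)
  have hYeq : ∀ y ∈ Y, y = y1 ∨ y = y2 := by
    intro y hy
    by_cases h : y = y1
    · exact Or.inl h
    · refine Or.inr (side_small hstar' (fun v => (hcov v).symm) hdisj.symm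
        (fun p hp q hq => (hadjXY q hq p hp).symm) hYind hy1 hy hy2 h hy12.symm)
  -- distinctness across sides
  have hne : ∀ x ∈ X, ∀ y ∈ Y, x ≠ y := by
    rintro x hx y hy rfl
    exact Set.disjoint_left.mp hdisj hx hy
  -- Step 4: build the 4-cycle x1 y1 x2 y2 x1
  have h1 : G.Adj x1 y1 := hadjXY x1 hx1 y1 hy1
  have h2 : G.Adj y1 x2 := (hadjXY x2 hx2 y1 hy1).symm
  have h3 : G.Adj x2 y2 := hadjXY x2 hx2 y2 hy2
  have h4 : G.Adj y2 x1 := (hadjXY x1 hx1 y2 hy2).symm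
  refine ⟨x1, .cons h1 (.cons h2 (.cons h3 (.cons h4 .nil))), ?_, rfl, ?_, ?_⟩
  · have n11 := hne x1 hx1 y1 hy1
    have n12 := hne x1 hx1 y2 hy2
    have n21 := hne x2 hx2 y1 hy1
    have n22 := hne x2 hx2 y2 hy2
    simp [SimpleGraph.Walk.isCycle_def, SimpleGraph.Walk.isTrail_def, Sym2.eq_iff,
      hx12, hy12, n11, n12, n21, n22, Ne.symm n11, Ne.symm n12, Ne.symm n21, Ne.symm n22,
      hx12.symm, hy12.symm]
  · intro w
    rcases hcov w with hw | hw
    · rcases hXeq w hw with rfl | rfl <;> simp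
    · rcases hYeq w hw with rfl | rfl <;> simp
  · intro e he
    induction e with
    | h u v =>
      rw [SimpleGraph.mem_edgeSet] at he
      have key : ∀ p q : V, G.Adj p q → p ∈ X → q ∈ Y →
          s(p, q) ∈ (SimpleGraph.Walk.cons h1 (.cons h2 (.cons h3 (.cons h4 .nil)))).edges := by
        intro p q hpq hp hq
        rcases hXeq p hp with rfl | rfl <;> rcases hYeq q hq with rfl | rfl <;>
          simp [Sym2.eq_iff]
      rcases hcov u with hu | hu <;> rcases hcov v with hv | hv
      · exact absurd he (hXind u hu v hv)
      · exact key u v he hu hv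
      · rw [Sym2.eq_swap]; exact key v u he.symm hv hu
      · exact absurd he (hYind u hu v hv)
end

section
/- Let G be a graph with no star cutset and let (X₁,X₂,A₁,A₂,B₁,B₂) be a split of a 2-join of G. Then for i = 1,2: every connected component of G[Xᵢ] meets both Aᵢ and Bᵢ. -/
open SimpleGraph

universe u

variable {V : Type u}

/-- Key lemma: if `G` has no star cutset, then every vertex of `X1` reaches `A1`
inside `G[X1]`. Stated with only the needed hypotheses so it can be applied in all
four symmetric configurations. -/
lemma key_lemma {V : Type u} [Fintype V] (G : SimpleGraph V)
    (X1 X2 A1 A2 B1 B2 : Set V)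
    (cover : ∀ v, v ∈ X1 ∨ v ∈ X2)
    (disj : Disjoint X1 X2)
    (A1sub : A1 ⊆ X1) (B1sub : B1 ⊆ X1) (B2sub : B2 ⊆ X2)
    (A1B1 : Disjoint A1 B1)
    (adjB : ∀ b1 ∈ B1, ∀ b2 ∈ B2, G.Adj b1 b2)
    (noOther : ∀ x1 ∈ X1, ∀ x2 ∈ X2, G.Adj x1 x2 →
      (x1 ∈ A1 ∧ x2 ∈ A2) ∨ (x1 ∈ B1 ∧ x2 ∈ B2))
    (path1 : ∃ a b : X1, (a : V) ∈ A1 ∧ (b : V) ∈ B1 ∧ (G.induce X1).Reachable a b)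
    (hstar : NoStarCutset G)
    (v : X1) : ∃ a : X1, (a : V) ∈ A1 ∧ (G.induce X1).Reachable v a := by
  by_contra hcon
  push_neg at hcon
  -- hcon : ∀ a : X1, ↑a ∈ A1 → ¬ Reachable v a
  obtain ⟨a, b0, haA, hb0B, hab⟩ := path1
  by_cases hB : ∀ b : X1, (b : V) ∈ B1 → (G.induce X1).Reachable v b
  · exact hcon a haA ((hB b0 hb0B).trans hab.symm)
  · push_neg at hB
    obtain ⟨b, hbB, hvb⟩ := hB
    -- star cutset candidate
    set S : Set V := {(b : V)} ∪ B2 with hS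
    have hmemS : ∀ {y : V}, y ∈ S ↔ (y = (b : V) ∨ y ∈ B2) := by
      intro y; simp [hS]
    have hcenter : ∃ x ∈ S, ∀ y ∈ S, y = x ∨ G.Adj x y := by
      refine ⟨(b : V), hmemS.mpr (Or.inl rfl), ?_⟩
      intro y hy
      rcases hmemS.mp hy with h | h
      · exact Or.inl h
      · exact Or.inr (adjB _ hbB _ h)
    have hconn : (G.induce (Sᶜ)).Connected := by
      by_contra hnc
      exact hstar S ⟨hcenter, hnc⟩
    -- memberships in Sᶜ
    have hX1S : ∀ {y : V}, y ∈ X1 → y ∉ B2 := fun hy hy2 =>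
      disj.ne_of_mem hy (B2sub hy2) rfl
    have hvS : (v : V) ∈ Sᶜ := by
      intro hv
      rcases hmemS.mp hv with h | h
      · exact hvb (by rw [show v = b from Subtype.ext h])
      · exact hX1S v.2 h
    have haS : (a : V) ∈ Sᶜ := by
      intro ha
      rcases hmemS.mp ha with h | h
      · exact A1B1.ne_of_mem haA hbB h
      · exact hX1S a.2 h
    -- the invariant: anything reachable from v in G - S stays in X1 and is
    -- reachable from v in G[X1]
    have inv : ∀ (x y : (Sᶜ : Set V)) (_ : (G.induce (Sᶜ)).Walk x y)
        (hx : (x : V) ∈ X1), (G.induce X1).Reachable v ⟨x, hx⟩ →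
        ∃ hy : (y : V) ∈ X1, (G.induce X1).Reachable v ⟨y, hy⟩ := by
      intro x y p
      induction p with
      | nil => intro hx hr; exact ⟨hx, hr⟩
      | @cons x u y hadj q ih =>
        intro hx hr
        have hadjG : G.Adj (x : V) (u : V) := hadj
        rcases cover (u : V) with huX1 | huX2
        · have hadj1 : (G.induce X1).Adj ⟨(x : V), hx⟩ ⟨(u : V), huX1⟩ := hadjG
          exact ih huX1 (hr.trans hadj1.reachable)
        · rcases noOther _ hx _ huX2 hadjG with ⟨hxA, _⟩ | ⟨_, huB2⟩
          · exact absurd hr (hcon ⟨(x : V), hx⟩ hxA)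
          · exact absurd (hmemS.mpr (Or.inr huB2)) u.2
    obtain ⟨p⟩ := hconn.preconnected ⟨(v : V), hvS⟩ ⟨(a : V), haS⟩
    obtain ⟨haX1, hra⟩ := inv _ _ p v.2 (by exact Reachable.refl _)
    exact hcon ⟨(a : V), haX1⟩ haA hra

/-- with no star cutset, every connected component of `G[Xᵢ]` meets both
`Aᵢ` and `Bᵢ`. -/
theorem stmt1 {V : Type u} [Fintype V] (G : SimpleGraph V)
    (X1 X2 A1 A2 B1 B2 : Set V)
    (hsplit : TwoJoinSplit G X1 X2 A1 A2 B1 B2)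
    (hstar : NoStarCutset G) :
    (∀ v : X1, (∃ a : X1, (a : V) ∈ A1 ∧ (G.induce X1).Reachable v a) ∧
               (∃ b : X1, (b : V) ∈ B1 ∧ (G.induce X1).Reachable v b)) ∧
    (∀ v : X2, (∃ a : X2, (a : V) ∈ A2 ∧ (G.induce X2).Reachable v a) ∧
               (∃ b : X2, (b : V) ∈ B2 ∧ (G.induce X2).Reachable v b)) := by
  obtain ⟨cover, disj, A1sub, B1sub, A2sub, B2sub, A1B1, A2B2, A1ne, B1ne, A2ne, B2ne,
    adjA, adjB, noOther, path1, path2, _, _⟩ := hsplit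
  have cover' : ∀ v, v ∈ X2 ∨ v ∈ X1 := fun v => (cover v).symm
  have noOther' : ∀ x ∈ X2, ∀ y ∈ X1, G.Adj x y →
      (x ∈ A2 ∧ y ∈ A1) ∨ (x ∈ B2 ∧ y ∈ B1) := by
    intro x hx y hy h
    rcases noOther y hy x hx h.symm with ⟨h1, h2⟩ | ⟨h1, h2⟩
    · exact Or.inl ⟨h2, h1⟩
    · exact Or.inr ⟨h2, h1⟩
  have noOtherA : ∀ x ∈ X1, ∀ y ∈ X2, G.Adj x y →
      (x ∈ B1 ∧ y ∈ B2) ∨ (x ∈ A1 ∧ y ∈ A2) := fun x hx y hy h =>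
    (noOther x hx y hy h).symm
  have noOtherA' : ∀ x ∈ X2, ∀ y ∈ X1, G.Adj x y →
      (x ∈ B2 ∧ y ∈ B1) ∨ (x ∈ A2 ∧ y ∈ A1) := fun x hx y hy h =>
    (noOther' x hx y hy h).symm
  have path1' : ∃ a b : X1, (a : V) ∈ B1 ∧ (b : V) ∈ A1 ∧ (G.induce X1).Reachable a b := by
    obtain ⟨a, b, ha, hb, h⟩ := path1; exact ⟨b, a, hb, ha, h.symm⟩
  have path2' : ∃ a b : X2, (a : V) ∈ B2 ∧ (b : V) ∈ A2 ∧ (G.induce X2).Reachable a b := by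
    obtain ⟨a, b, ha, hb, h⟩ := path2; exact ⟨b, a, hb, ha, h.symm⟩
  have adjB' : ∀ b2 ∈ B2, ∀ b1 ∈ B1, G.Adj b2 b1 := fun b2 h2 b1 h1 => (adjB b1 h1 b2 h2).symm
  have adjA' : ∀ a2 ∈ A2, ∀ a1 ∈ A1, G.Adj a2 a1 := fun a2 h2 a1 h1 => (adjA a1 h1 a2 h2).symm
  constructor
  · intro v
    exact ⟨key_lemma G X1 X2 A1 A2 B1 B2 cover disj A1sub B1sub B2sub A1B1 adjB
      noOther path1 hstar v,
      key_lemma G X1 X2 B1 B2 A1 A2 cover disj B1sub A1sub A2sub A1B1.symm adjA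
      noOtherA path1' hstar v⟩
  · intro v
    exact ⟨key_lemma G X2 X1 A2 A1 B2 B1 cover' disj.symm A2sub B2sub B1sub A2B2 adjB'
      noOther' path2 hstar v,
      key_lemma G X2 X1 B2 B1 A2 A1 cover' disj.symm B2sub A2sub A1sub A2B2.symm adjA'
      noOtherA' path2' hstar v⟩
end

section
/- Let G be a graph with no star cutset and let (X₁,X₂,A₁,A₂,B₁,B₂) be a split of a 2-join of G. Then for i = 1,2: every vertex u ∈ Xᵢ has a neighbor in Xᵢ. -/
open SimpleGraph

universe u

variable {V : Type u}

/-- Key helper: if `u ∈ X1` with `u ∉ B1` has all its neighbors inside `A2`,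
then `G` has a star cutset or the `A1`–`B1` path condition fails. -/
lemma star_helper (G : SimpleGraph V) (X1 X2 A1 A2 B1 : Set V) (u : V)
    (hdisj : Disjoint X1 X2)
    (hAB : Disjoint A1 B1)
    (hA1 : A1 ⊆ X1) (hB1 : B1 ⊆ X1) (hA2 : A2 ⊆ X2)
    (hB1ne : B1.Nonempty)
    (hadjA : ∀ a ∈ A1, ∀ b ∈ A2, G.Adj a b)
    (hNu : ∀ w, G.Adj u w → w ∈ A2)
    (hu : u ∈ X1) (hub : u ∉ B1)
    (hpath : ∃ a b : X1, (a : V) ∈ A1 ∧ (b : V) ∈ B1 ∧ (G.induce X1).Reachable a b)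
    (hstar : NoStarCutset G) : False := by
  by_cases hex : ∃ a ∈ A1, a ≠ u
  · obtain ⟨a, haA, hau⟩ := hex
    obtain ⟨b₁, hb₁⟩ := hB1ne
    set S : Set V := insert a A2 with hS
    apply hstar S
    constructor
    · refine ⟨a, Set.mem_insert _ _, ?_⟩
      intro y hy
      rcases hy with h | h
      · exact Or.inl h
      · exact Or.inr (hadjA a haA y h)
    · intro hconn
      have huS : u ∈ Sᶜ := by
        intro hmem
        rcases hmem with h | h
        · exact hau h.symm
        · exact hdisj.ne_of_mem hu (hA2 h) rfl
      have hbS : b₁ ∈ Sᶜ := by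
        intro hmem
        rcases hmem with h | h
        · exact hAB.ne_of_mem haA hb₁ h.symm
        · exact hdisj.ne_of_mem (hB1 hb₁) (hA2 h) rfl
      have hreach := hconn.preconnected ⟨u, huS⟩ ⟨b₁, hbS⟩
      obtain ⟨p⟩ := hreach
      cases p with
      | nil => exact hub (by simpa using hb₁)
      | cons h q =>
          rename_i c
          have hadj : G.Adj u (c : V) := h
          exact c.2 (Set.mem_insert_iff.mpr (Or.inr (hNu _ hadj)))
  · push_neg at hex
    obtain ⟨a, b, haA, hbB, hr⟩ := hpath
    have hau : (a : V) = u := hex _ haA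
    obtain ⟨p⟩ := hr
    cases p with
    | nil => exact hub (hau ▸ hbB)
    | cons h q =>
        rename_i c
        have hadj : G.Adj (a : V) (c : V) := h
        rw [hau] at hadj
        exact hdisj.ne_of_mem c.2 (hA2 (hNu _ hadj)) rfl

/-- with no star cutset, every vertex of `Xᵢ` has a neighbor in `Xᵢ`. -/
theorem stmt2 {V : Type u} [Fintype V] (G : SimpleGraph V)
    (X1 X2 A1 A2 B1 B2 : Set V)
    (hsplit : TwoJoinSplit G X1 X2 A1 A2 B1 B2)
    (hstar : NoStarCutset G) :
    (∀ u ∈ X1, ∃ w ∈ X1, G.Adj u w) ∧ (∀ u ∈ X2, ∃ w ∈ X2, G.Adj u w) := by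
  obtain ⟨cover, disj, A1s, B1s, A2s, B2s, AB1, AB2, A1ne, B1ne, A2ne, B2ne,
    adjA, adjB, noOther, path1, path2, _, _⟩ := hsplit
  constructor
  · intro u hu
    by_contra hcon
    push_neg at hcon
    have hX2 : ∀ w, G.Adj u w → (u ∈ A1 ∧ w ∈ A2) ∨ (u ∈ B1 ∧ w ∈ B2) := by
      intro w hw
      rcases cover w with h | h
      · exact absurd hw (hcon w h)
      · exact noOther u hu w h hw
    by_cases hA : u ∈ A1
    · refine star_helper G X1 X2 A1 A2 B1 u disj AB1 A1s B1s A2s B1ne adjA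
        (fun w hw => ?_) hu (Set.disjoint_left.mp AB1 hA) path1 hstar
      rcases hX2 w hw with ⟨_, h⟩ | ⟨h, _⟩
      · exact h
      · exact absurd h (Set.disjoint_left.mp AB1 hA)
    · by_cases hB : u ∈ B1
      · refine star_helper G X1 X2 B1 B2 A1 u disj AB1.symm B1s A1s B2s A1ne adjB
          (fun w hw => ?_) hu hA ?_ hstar
        · rcases hX2 w hw with ⟨h, _⟩ | ⟨_, h⟩
          · exact absurd h hA
          · exact h
        · obtain ⟨a, b, ha, hb, hr⟩ := path1
          exact ⟨b, a, hb, ha, hr.symm⟩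
      · refine star_helper G X1 X2 A1 A2 B1 u disj AB1 A1s B1s A2s B1ne adjA
          (fun w hw => ?_) hu hB path1 hstar
        rcases hX2 w hw with ⟨h, _⟩ | ⟨h, _⟩
        · exact absurd h hA
        · exact absurd h hB
  · intro u hu
    by_contra hcon
    push_neg at hcon
    have hX1 : ∀ w, G.Adj u w → (u ∈ A2 ∧ w ∈ A1) ∨ (u ∈ B2 ∧ w ∈ B1) := by
      intro w hw
      rcases cover w with h | h
      · rcases noOther w h u hu hw.symm with ⟨h1, h2⟩ | ⟨h1, h2⟩
        · exact Or.inl ⟨h2, h1⟩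
        · exact Or.inr ⟨h2, h1⟩
      · exact absurd hw (hcon w h)
    have adjA' : ∀ a ∈ A2, ∀ b ∈ A1, G.Adj a b := fun a ha b hb => (adjA b hb a ha).symm
    have adjB' : ∀ a ∈ B2, ∀ b ∈ B1, G.Adj a b := fun a ha b hb => (adjB b hb a ha).symm
    by_cases hA : u ∈ A2
    · refine star_helper G X2 X1 A2 A1 B2 u disj.symm AB2 A2s B2s A1s B2ne adjA'
        (fun w hw => ?_) hu (Set.disjoint_left.mp AB2 hA) path2 hstar
      rcases hX1 w hw with ⟨_, h⟩ | ⟨h, _⟩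
      · exact h
      · exact absurd h (Set.disjoint_left.mp AB2 hA)
    · by_cases hB : u ∈ B2
      · refine star_helper G X2 X1 B2 B1 A2 u disj.symm AB2.symm B2s A2s B1s A2ne adjB'
          (fun w hw => ?_) hu hA ?_ hstar
        · rcases hX1 w hw with ⟨h, _⟩ | ⟨_, h⟩
          · exact absurd h hA
          · exact h
        · obtain ⟨a, b, ha, hb, hr⟩ := path2
          exact ⟨b, a, hb, ha, hr.symm⟩
      · refine star_helper G X2 X1 A2 A1 B2 u disj.symm AB2 A2s B2s A1s B2ne adjA'
          (fun w hw => ?_) hu hB path2 hstar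
        rcases hX1 w hw with ⟨h, _⟩ | ⟨h, _⟩
        · exact absurd h hA
        · exact absurd h hB
end

section
/- Let G be a graph with no star cutset and let (X₁,X₂,A₁,A₂,B₁,B₂) be a split of a 2-join of G. Then for i = 1,2: every vertex of Aᵢ has a non-neighbor in Bᵢ, every vertex of Bᵢ has a non-neighbor in Aᵢ, and |Xᵢ| ≥ 4. -/
open SimpleGraph

universe u

variable {V : Type u}

section StarCutsetAux

lemma reach_closed {W : Type*} {H : SimpleGraph W} {P : W → Prop}
    (hP : ∀ x y, H.Adj x y → P x → P y) :
    ∀ {u v : W}, H.Reachable u v → P u → P v := by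
  intro u v h
  obtain ⟨w⟩ := h
  induction w with
  | nil => exact id
  | cons h' _ ih => exact fun hu => ih (hP _ _ h' hu)

lemma not_connected_of_sep (G : SimpleGraph V) {T : Set V} (Q : V → Prop) {u v : V}
    (hu : u ∈ T) (hv : v ∈ T) (hQu : Q u) (hQv : ¬ Q v)
    (hsep : ∀ x y, x ∈ T → y ∈ T → G.Adj x y → Q x → Q y) :
    ¬ (G.induce T).Connected := by
  intro hc
  exact hQv (reach_closed (P := fun x : T => Q x.1)
    (fun x y hxy hx => hsep x.1 y.1 x.2 y.2 hxy hx) (hc.preconnected ⟨u, hu⟩ ⟨v, hv⟩) hQu)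

lemma chordless_two {G : SimpleGraph V} {X : Set V} {a b : V} (ha : a ∈ X) (hb : b ∈ X)
    (hne : a ≠ b) (hXab : ∀ x ∈ X, x = a ∨ x = b) (hadj : G.Adj a b) :
    IsChordlessPathGraph (G.induce X) := by
  have hadj' : (G.induce X).Adj ⟨a, ha⟩ ⟨b, hb⟩ := hadj
  have key : ∀ z : ↥X, z = ⟨a, ha⟩ ∨ z = ⟨b, hb⟩ := by
    intro z
    rcases hXab z.1 z.2 with h | h
    · exact Or.inl (Subtype.ext h)
    · exact Or.inr (Subtype.ext h)
  refine ⟨⟨a, ha⟩, ⟨b, hb⟩, SimpleGraph.Walk.cons hadj' SimpleGraph.Walk.nil, ?_, ?_, ?_⟩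
  · rw [SimpleGraph.Walk.isPath_def]
    simp [hne]
  · intro z
    rcases key z with rfl | rfl <;> simp
  · intro e he
    induction e using Sym2.ind with
    | _ x y =>
      rw [SimpleGraph.mem_edgeSet] at he
      rcases key x with rfl | rfl <;> rcases key y with rfl | rfl
      · exact (he.ne rfl).elim
      · simp
      · rw [Sym2.eq_swap]
        simp
      · exact (he.ne rfl).elim

variable {G : SimpleGraph V} {X1 X2 A1 A2 B1 B2 : Set V}

lemma TwoJoinSplit.swapAB (hs : TwoJoinSplit G X1 X2 A1 A2 B1 B2) :
    TwoJoinSplit G X1 X2 B1 B2 A1 A2 where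
  cover := hs.cover
  disj := hs.disj
  A1sub := hs.B1sub
  B1sub := hs.A1sub
  A2sub := hs.B2sub
  B2sub := hs.A2sub
  A1B1disj := hs.A1B1disj.symm
  A2B2disj := hs.A2B2disj.symm
  A1ne := hs.B1ne
  B1ne := hs.A1ne
  A2ne := hs.B2ne
  B2ne := hs.A2ne
  adjA := hs.adjB
  adjB := hs.adjA
  noOther := fun x hx y hy h => (hs.noOther x hx y hy h).symm
  path1 := by
    obtain ⟨a, b, ha, hb, hr⟩ := hs.path1
    exact ⟨b, a, hb, ha, hr.symm⟩
  path2 := by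
    obtain ⟨a, b, ha, hb, hr⟩ := hs.path2
    exact ⟨b, a, hb, ha, hr.symm⟩
  notPath1 := fun h1 h2 => hs.notPath1 h2 h1
  notPath2 := fun h1 h2 => hs.notPath2 h2 h1

lemma TwoJoinSplit.swapSide (hs : TwoJoinSplit G X1 X2 A1 A2 B1 B2) :
    TwoJoinSplit G X2 X1 A2 A1 B2 B1 where
  cover := fun v => (hs.cover v).symm
  disj := hs.disj.symm
  A1sub := hs.A2sub
  B1sub := hs.B2sub
  A2sub := hs.A1sub
  B2sub := hs.B1sub
  A1B1disj := hs.A2B2disj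
  A2B2disj := hs.A1B1disj
  A1ne := hs.A2ne
  B1ne := hs.B2ne
  A2ne := hs.A1ne
  B2ne := hs.B1ne
  adjA := fun a2 ha2 a1 ha1 => (hs.adjA a1 ha1 a2 ha2).symm
  adjB := fun b2 hb2 b1 hb1 => (hs.adjB b1 hb1 b2 hb2).symm
  noOther := fun x hx y hy h => by
    rcases hs.noOther y hy x hx h.symm with ⟨h1, h2⟩ | ⟨h1, h2⟩
    · exact Or.inl ⟨h2, h1⟩
    · exact Or.inr ⟨h2, h1⟩
  path1 := hs.path2
  path2 := hs.path1
  notPath1 := hs.notPath2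
  notPath2 := hs.notPath1

lemma TwoJoinSplit.nonnbr (hs : TwoJoinSplit G X1 X2 A1 A2 B1 B2)
    (hstar : NoStarCutset G) : ∀ a ∈ A1, ∃ b ∈ B1, ¬ G.Adj a b := by
  intro a ha
  by_contra hcon
  push_neg at hcon
  obtain ⟨b2, hb2⟩ := hs.B2ne
  obtain ⟨a2, ha2⟩ := hs.A2ne
  have haX1 : a ∈ X1 := hs.A1sub ha
  have hb2X2 : b2 ∈ X2 := hs.B2sub hb2
  have ha2X2 : a2 ∈ X2 := hs.A2sub ha2
  have haB1 : a ∉ B1 := fun h => Set.disjoint_left.mp hs.A1B1disj ha h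
  have haX2 : a ∉ X2 := fun h => Set.disjoint_left.mp hs.disj haX1 h
  have hanb2 : ¬ G.Adj a b2 := by
    intro h
    rcases hs.noOther a haX1 b2 hb2X2 h with ⟨_, h2⟩ | ⟨h1, _⟩
    · exact Set.disjoint_left.mp hs.A2B2disj h2 hb2
    · exact haB1 h1
  have hb2a : b2 ≠ a := fun h => haX2 (h ▸ hb2X2)
  -- Step 1: X1 ⊆ N[a]
  have hX1N : ∀ u ∈ X1, u = a ∨ G.Adj a u := by
    intro u hu
    by_contra hcu
    push_neg at hcu
    obtain ⟨hua, hunadj⟩ := hcu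
    refine hstar (insert a (G.neighborSet a)) ⟨⟨a, Set.mem_insert _ _, ?_⟩, ?_⟩
    · intro y hy
      rcases hy with rfl | hy
      · exact Or.inl rfl
      · exact Or.inr hy
    · refine not_connected_of_sep G (Q := (· ∈ X1)) (u := u) (v := b2) ?_ ?_ hu
        (fun h => Set.disjoint_left.mp hs.disj h hb2X2) ?_
      · simp only [Set.mem_compl_iff, Set.mem_insert_iff, mem_neighborSet]
        push_neg
        exact ⟨hua, hunadj⟩
      · simp only [Set.mem_compl_iff, Set.mem_insert_iff, mem_neighborSet]
        push_neg
        exact ⟨hb2a, hanb2⟩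
      · intro x y hx hy hxy hxX1
        by_contra hyX1
        have hyX2 := (hs.cover y).resolve_left hyX1
        simp only [Set.mem_compl_iff, Set.mem_insert_iff, mem_neighborSet] at hx hy
        push_neg at hx hy
        rcases hs.noOther x hxX1 y hyX2 hxy with ⟨_, hyA⟩ | ⟨hxB, _⟩
        · exact hy.2 (hs.adjA a ha y hyA)
        · exact hx.2 (hcon x hxB)
  -- Step 2: X1 ⊆ {a} ∪ B1
  have hX1B : ∀ x ∈ X1, x = a ∨ x ∈ B1 := by
    intro x hx
    by_contra hcx
    push_neg at hcx
    obtain ⟨hxa, hxB⟩ := hcx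
    have hxX2 : x ∉ X2 := fun h => Set.disjoint_left.mp hs.disj hx h
    refine hstar (insert a (G.neighborSet a \ {x})) ⟨⟨a, Set.mem_insert _ _, ?_⟩, ?_⟩
    · intro y hy
      rcases hy with rfl | hy
      · exact Or.inl rfl
      · exact Or.inr hy.1
    · refine not_connected_of_sep G (Q := (· = x)) (u := x) (v := b2) ?_ ?_ rfl
        (fun h => hxX2 (h ▸ hb2X2)) ?_
      · intro hmem
        rcases Set.mem_insert_iff.mp hmem with h | hmem
        · exact hxa h
        · exact hmem.2 rfl
      · intro hmem
        rcases Set.mem_insert_iff.mp hmem with h | hmem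
        · exact hb2a h
        · exact hanb2 hmem.1
      · intro p q hp hq hpq hpx
        exfalso
        have hpq' : G.Adj x q := hpx ▸ hpq
        simp only [Set.mem_compl_iff, Set.mem_insert_iff, Set.mem_diff,
          Set.mem_singleton_iff, mem_neighborSet] at hq
        push_neg at hq
        rcases hs.cover q with hqX1 | hqX2
        · rcases hX1N q hqX1 with rfl | hqa
          · exact hq.1 rfl
          · exact hpq'.ne' (hq.2 hqa)
        · rcases hs.noOther x hx q hqX2 hpq' with ⟨_, hqA⟩ | ⟨hpB, _⟩
          · exact hpq'.ne' (hq.2 (hs.adjA a ha q hqA))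
          · exact hxB hpB
  have hA1 : ∀ a' ∈ A1, a' = a := fun a' ha' =>
    (hX1B a' (hs.A1sub ha')).resolve_right fun h => Set.disjoint_left.mp hs.A1B1disj ha' h
  obtain ⟨b0, hb0⟩ := hs.B1ne
  have hb0X1 : b0 ∈ X1 := hs.B1sub hb0
  have hb0a : b0 ≠ a := fun h => haB1 (h ▸ hb0)
  by_cases hsingle : ∀ b' ∈ B1, b' = b0
  · -- X1 = {a, b0} : chordless path, contradiction with notPath1
    have hA1card : A1.ncard = 1 := by
      rw [show A1 = {a} from Set.eq_singleton_iff_unique_mem.mpr ⟨ha, hA1⟩]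
      exact Set.ncard_singleton a
    have hB1card : B1.ncard = 1 := by
      rw [show B1 = {b0} from Set.eq_singleton_iff_unique_mem.mpr ⟨hb0, hsingle⟩]
      exact Set.ncard_singleton b0
    refine hs.notPath1 hA1card hB1card
      (chordless_two haX1 hb0X1 hb0a.symm ?_ (hcon b0 hb0))
    intro x hx
    rcases hX1B x hx with h | h
    · exact Or.inl h
    · exact Or.inr (hsingle x h)
  · push_neg at hsingle
    obtain ⟨b', hb', hb'0⟩ := hsingle
    have hb'X1 : b' ∈ X1 := hs.B1sub hb'
    -- Step 4: for each b ∈ B1, X1 ⊆ N[b]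
    have hclq : ∀ b ∈ B1, ∀ u ∈ X1, u = b ∨ G.Adj b u := by
      intro b hb u hu
      by_contra hcu
      push_neg at hcu
      obtain ⟨hub, hunadj⟩ := hcu
      have hbX1 : b ∈ X1 := hs.B1sub hb
      have hba : b ≠ a := fun h => haB1 (h ▸ hb)
      have hbna2 : ¬ G.Adj b a2 := by
        intro h
        rcases hs.noOther b hbX1 a2 ha2X2 h with ⟨h1, _⟩ | ⟨_, h2⟩
        · exact hba (hA1 b h1)
        · exact Set.disjoint_left.mp hs.A2B2disj ha2 h2
      have ha2b : a2 ≠ b := fun h => Set.disjoint_left.mp hs.disj hbX1 (h ▸ ha2X2)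
      refine hstar (insert b (G.neighborSet b)) ⟨⟨b, Set.mem_insert _ _, ?_⟩, ?_⟩
      · intro y hy
        rcases hy with rfl | hy
        · exact Or.inl rfl
        · exact Or.inr hy
      · refine not_connected_of_sep G (Q := (· ∈ X1)) (u := u) (v := a2) ?_ ?_ hu
          (fun h => Set.disjoint_left.mp hs.disj h ha2X2) ?_
        · simp only [Set.mem_compl_iff, Set.mem_insert_iff, mem_neighborSet]
          push_neg
          exact ⟨hub, hunadj⟩
        · simp only [Set.mem_compl_iff, Set.mem_insert_iff, mem_neighborSet]
          push_neg
          exact ⟨ha2b, hbna2⟩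
        · intro x y hx hy hxy hxX1
          by_contra hyX1
          have hyX2 := (hs.cover y).resolve_left hyX1
          simp only [Set.mem_compl_iff, Set.mem_insert_iff, mem_neighborSet] at hx hy
          push_neg at hx hy
          rcases hs.noOther x hxX1 y hyX2 hxy with ⟨hxA, _⟩ | ⟨_, hyB⟩
          · refine hx.2 ?_
            rw [hA1 x hxA]
            exact (hcon b hb).symm
          · exact hy.2 (hs.adjB b hb y hyB)
    -- Step 5: isolate b'
    refine hstar (insert b0 ((X1 \ {b0, b'}) ∪ B2)) ⟨⟨b0, Set.mem_insert _ _, ?_⟩, ?_⟩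
    · intro y hy
      rcases hy with rfl | hy
      · exact Or.inl rfl
      rcases hy with ⟨hyX1, hyne⟩ | hyB2
      · refine Or.inr ?_
        rcases hclq b0 hb0 y hyX1 with rfl | h
        · exact absurd (Set.mem_insert _ _) hyne
        · exact h
      · exact Or.inr (hs.adjB b0 hb0 y hyB2)
    · have hb'B2 : b' ∉ B2 := fun h => Set.disjoint_left.mp hs.disj hb'X1 (hs.B2sub h)
      have ha2b0 : a2 ≠ b0 := fun h => Set.disjoint_left.mp hs.disj hb0X1 (h ▸ ha2X2)
      have ha2X1 : a2 ∉ X1 := fun h => Set.disjoint_left.mp hs.disj h ha2X2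
      have ha2B2 : a2 ∉ B2 := fun h => Set.disjoint_left.mp hs.A2B2disj ha2 h
      refine not_connected_of_sep G (Q := (· = b')) (u := b') (v := a2) ?_ ?_ rfl
        (fun h => ha2X1 (h ▸ hb'X1)) ?_
      · intro hmem
        rcases Set.mem_insert_iff.mp hmem with h | hmem
        · exact hb'0 h
        rcases hmem with ⟨_, hne⟩ | hB2'
        · exact hne (Set.mem_insert_iff.mpr (Or.inr (Set.mem_singleton _)))
        · exact hb'B2 hB2'
      · intro hmem
        rcases Set.mem_insert_iff.mp hmem with h | hmem
        · exact ha2X1 (h ▸ hb0X1)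
        rcases hmem with ⟨hX1', _⟩ | hB2'
        · exact ha2X1 hX1'
        · exact ha2B2 hB2'
      · intro p q hp hq hpq hpb'
        exfalso
        have hpq' : G.Adj b' q := hpb' ▸ hpq
        have hqS : q ∉ insert b0 ((X1 \ {b0, b'}) ∪ B2) := hq
        rcases hs.cover q with hqX1 | hqX2
        · rcases eq_or_ne q b0 with rfl | hqb0
          · exact hqS (Set.mem_insert _ _)
          · refine hqS (Set.mem_insert_iff.mpr (Or.inr (Set.mem_union_left _ ⟨hqX1, ?_⟩)))
            intro hm
            rcases hm with rfl | hm
            · exact hqb0 rfl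
            · exact hpq'.ne' hm
        · rcases hs.noOther b' hb'X1 q hqX2 hpq' with ⟨hA', _⟩ | ⟨_, hB'⟩
          · exact haB1 (hA1 b' hA' ▸ hb')
          · exact hqS (Set.mem_insert_iff.mpr (Or.inr (Set.mem_union_right _ hB')))

end StarCutsetAux
section CardAux

variable {G : SimpleGraph V} {X1 X2 A1 A2 B1 B2 : Set V}

lemma side_lemma [Fintype V] (hs : TwoJoinSplit G X1 X2 A1 A2 B1 B2)
    (h2 : ∀ b ∈ B1, ∃ a' ∈ A1, ¬ G.Adj b a') {a : V} (hA : A1 = {a})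
    (hX : X1.ncard ≤ 3) (hBge : 2 ≤ B1.ncard) : False := by
  have hsub : A1 ∪ B1 ⊆ X1 := Set.union_subset hs.A1sub hs.B1sub
  have hun : (A1 ∪ B1).ncard = A1.ncard + B1.ncard :=
    Set.ncard_union_eq hs.A1B1disj (Set.toFinite _) (Set.toFinite _)
  have hle : (A1 ∪ B1).ncard ≤ X1.ncard := Set.ncard_le_ncard hsub (Set.toFinite _)
  have hA1card : A1.ncard = 1 := by rw [hA]; exact Set.ncard_singleton a
  have hXeq : A1 ∪ B1 = X1 :=
    Set.eq_of_subset_of_ncard_le hsub (by omega) (Set.toFinite _)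
  have haA : a ∈ A1 := by rw [hA]; exact rfl
  have hnadj : ∀ b ∈ B1, ¬ G.Adj a b := by
    intro b hb hadj
    obtain ⟨a', ha', hna⟩ := h2 b hb
    rw [hA, Set.mem_singleton_iff] at ha'
    rw [ha'] at hna
    exact hna hadj.symm
  obtain ⟨u, v, huA, hvB, hr⟩ := hs.path1
  have hua : u.1 = a := by rw [hA, Set.mem_singleton_iff] at huA; exact huA
  have huv : u = v := by
    refine (reach_closed (P := fun x : ↥X1 => x = u) ?_ hr rfl).symm
    intro x y hxy hxu
    exfalso
    have hy : y.1 ∈ A1 ∪ B1 := (Set.ext_iff.mp hXeq y.1).mpr y.2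
    have hadj : G.Adj a y.1 := by
      rw [hxu] at hxy
      rw [← hua]
      exact hxy
    rcases hy with hyA | hyB
    · rw [hA, Set.mem_singleton_iff] at hyA
      exact hadj.ne hyA.symm
    · exact hnadj y.1 hyB hadj
  have haB : a ∈ B1 := by
    rw [← hua, huv]
    exact hvB
  exact Set.disjoint_left.mp hs.A1B1disj haA haB

lemma case11_lemma [Fintype V] (hs : TwoJoinSplit G X1 X2 A1 A2 B1 B2)
    (h1 : ∀ a ∈ A1, ∃ b ∈ B1, ¬ G.Adj a b) {a b : V}
    (hA : A1 = {a}) (hB : B1 = {b}) (hX : X1.ncard ≤ 3) : False := by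
  classical
  have haA : a ∈ A1 := by rw [hA]; exact rfl
  have hbB : b ∈ B1 := by rw [hB]; exact rfl
  have haX : a ∈ X1 := hs.A1sub haA
  have hbX : b ∈ X1 := hs.B1sub hbB
  have hab : a ≠ b := fun h => Set.disjoint_left.mp hs.A1B1disj haA (h ▸ hbB)
  have hnadj : ¬ G.Adj a b := by
    obtain ⟨b', hb', hn⟩ := h1 a haA
    rw [hB, Set.mem_singleton_iff] at hb'
    rw [← hb']
    exact hn
  obtain ⟨u, v, huA, hvB, hr⟩ := hs.path1
  have hua : u.1 = a := by rw [hA, Set.mem_singleton_iff] at huA; exact huA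
  have hvb : v.1 = b := by rw [hB, Set.mem_singleton_iff] at hvB; exact hvB
  letI : Fintype ↥X1 := Fintype.ofFinite _
  have hcard : Fintype.card ↥X1 ≤ 3 := by
    rw [← Set.toFinset_card, ← Set.ncard_eq_toFinset_card']
    exact hX
  obtain ⟨w⟩ := hr
  obtain ⟨p, hp⟩ := w.toPath
  have hlen : p.support.length ≤ 3 :=
    le_trans (List.Nodup.length_le_card hp.support_nodup) hcard
  cases p with
  | nil => exact hab (hua.symm.trans hvb)
  | cons hadj pt =>
    rename_i c
    cases pt with
    | nil =>
      refine hnadj ?_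
      rw [← hua, ← hvb]
      exact hadj
    | cons hadj2 pt2 =>
      rename_i d
      cases pt2 with
      | nil =>
        -- main case: path u - c - v with u ↦ a, v ↦ b
        have hac : a ≠ c.1 := fun h => hadj.ne (Subtype.ext (hua.trans h))
        have hcb : c.1 ≠ b := fun h => hadj2.ne (Subtype.ext (h.trans hvb.symm))
        have hsub3 : ({a, c.1, b} : Set V) ⊆ X1 := by
          intro x hx
          simp only [Set.mem_insert_iff, Set.mem_singleton_iff] at hx
          rcases hx with rfl | rfl | rfl
          exacts [haX, c.2, hbX]
        have hc3 : ({a, c.1, b} : Set V).ncard = 3 := by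
          rw [Set.ncard_insert_of_notMem (by simp [hac, hab]),
            Set.ncard_insert_of_notMem (by simp [hcb]), Set.ncard_singleton]
        have hXeq : ({a, c.1, b} : Set V) = X1 :=
          Set.eq_of_subset_of_ncard_le hsub3 (by omega) (Set.toFinite _)
        have key : ∀ z : ↥X1, z = u ∨ z = c ∨ z = v := by
          intro z
          have hz : z.1 ∈ ({a, c.1, b} : Set V) := (Set.ext_iff.mp hXeq z.1).mpr z.2
          simp only [Set.mem_insert_iff, Set.mem_singleton_iff] at hz
          rcases hz with h | h | h
          · exact Or.inl (Subtype.ext (h.trans hua.symm))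
          · exact Or.inr (Or.inl (Subtype.ext h))
          · exact Or.inr (Or.inr (Subtype.ext (h.trans hvb.symm)))
        refine hs.notPath1 (by rw [hA]; exact Set.ncard_singleton a)
          (by rw [hB]; exact Set.ncard_singleton b)
          ⟨u, v, SimpleGraph.Walk.cons hadj (SimpleGraph.Walk.cons hadj2 SimpleGraph.Walk.nil),
            hp, ?_, ?_⟩
        · intro z
          simp only [SimpleGraph.Walk.support_cons, SimpleGraph.Walk.support_nil,
            List.mem_cons, List.mem_singleton]
          rcases key z with rfl | rfl | rfl
          · exact Or.inl rfl
          · exact Or.inr (Or.inl rfl)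
          · exact Or.inr (Or.inr (Or.inl rfl))
        · intro e he
          induction e using Sym2.ind with
          | _ x y =>
            rw [SimpleGraph.mem_edgeSet] at he
            simp only [SimpleGraph.Walk.edges_cons, SimpleGraph.Walk.edges_nil,
              List.mem_cons, List.not_mem_nil, or_false]
            have hnadj' : ¬ (G.induce X1).Adj u v := by
              intro h
              refine hnadj ?_
              rw [← hua, ← hvb]
              exact h
            rcases key x with rfl | rfl | rfl <;> rcases key y with rfl | rfl | rfl
            · exact (he.ne rfl).elim
            · exact Or.inl rfl
            · exact (hnadj' he).elim
            · exact Or.inl Sym2.eq_swap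
            · exact (he.ne rfl).elim
            · exact Or.inr rfl
            · exact (hnadj' he.symm).elim
            · exact Or.inr Sym2.eq_swap
            · exact (he.ne rfl).elim
      | cons hadj3 pt3 =>
        exfalso
        simp only [SimpleGraph.Walk.support_cons, List.length_cons] at hlen
        have := SimpleGraph.Walk.length_support pt3
        omega

lemma TwoJoinSplit.card4 [Fintype V] (hs : TwoJoinSplit G X1 X2 A1 A2 B1 B2)
    (hstar : NoStarCutset G) : 4 ≤ X1.ncard := by
  have h1 := hs.nonnbr hstar
  have h2 := hs.swapAB.nonnbr hstar
  by_contra hlt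
  push_neg at hlt
  have hX : X1.ncard ≤ 3 := by omega
  have hApos : 0 < A1.ncard := (Set.ncard_pos (Set.toFinite _)).mpr hs.A1ne
  have hBpos : 0 < B1.ncard := (Set.ncard_pos (Set.toFinite _)).mpr hs.B1ne
  have hsub : A1 ∪ B1 ⊆ X1 := Set.union_subset hs.A1sub hs.B1sub
  have hun : (A1 ∪ B1).ncard = A1.ncard + B1.ncard :=
    Set.ncard_union_eq hs.A1B1disj (Set.toFinite _) (Set.toFinite _)
  have hle : (A1 ∪ B1).ncard ≤ X1.ncard := Set.ncard_le_ncard hsub (Set.toFinite _)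
  rcases Nat.lt_or_ge A1.ncard 2 with hA | hA
  · obtain ⟨a, haA⟩ := Set.ncard_eq_one.mp (by omega : A1.ncard = 1)
    rcases Nat.lt_or_ge B1.ncard 2 with hB | hB
    · obtain ⟨b, hbB⟩ := Set.ncard_eq_one.mp (by omega : B1.ncard = 1)
      exact case11_lemma hs h1 haA hbB hX
    · exact side_lemma hs h2 haA hX hB
  · obtain ⟨b, hbB⟩ := Set.ncard_eq_one.mp (by omega : B1.ncard = 1)
    exact side_lemma hs.swapAB h1 hbB hX hA

end CardAux
/-- with no star cutset, every vertex of `Aᵢ` has a non-neighbor in `Bᵢ`,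
every vertex of `Bᵢ` has a non-neighbor in `Aᵢ`, and `|Xᵢ| ≥ 4`. -/
theorem stmt3 {V : Type u} [Fintype V] (G : SimpleGraph V)
    (X1 X2 A1 A2 B1 B2 : Set V)
    (hsplit : TwoJoinSplit G X1 X2 A1 A2 B1 B2)
    (hstar : NoStarCutset G) :
    (∀ a ∈ A1, ∃ b ∈ B1, ¬ G.Adj a b) ∧ (∀ b ∈ B1, ∃ a ∈ A1, ¬ G.Adj b a) ∧
    (∀ a ∈ A2, ∃ b ∈ B2, ¬ G.Adj a b) ∧ (∀ b ∈ B2, ∃ a ∈ A2, ¬ G.Adj b a) ∧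
    4 ≤ X1.ncard ∧ 4 ≤ X2.ncard :=
  ⟨hsplit.nonnbr hstar, hsplit.swapAB.nonnbr hstar,
    hsplit.swapSide.nonnbr hstar, hsplit.swapSide.swapAB.nonnbr hstar,
    hsplit.card4 hstar, hsplit.swapSide.card4 hstar⟩
end

section
/- Let G be a bipartite graph with no star cutset and let (X₁,X₂,A₁,...,A₆) be a split of a 6-join of G. Then X₁ \ (A₁ ∪ A₃ ∪ A₅) ≠ ∅ and X₂ \ (A₂ ∪ A₄ ∪ A₆) ≠ ∅. -/
open SimpleGraph

universe u

variable {V : Type u}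

private lemma fin2_aux : ∀ a b c : Fin 2, a ≠ b → c ≠ b → a = c := by decide

/-- If `v`'s whole neighborhood is a set `T` of neighbors of `u`, with `u ≠ v`, and some
vertex `z` avoids `{u} ∪ T ∪ {v}`, then `{u} ∪ T` is a star cutset. -/
private lemma key_aux {V : Type u} (G : SimpleGraph V) (hstar : NoStarCutset G)
    (u v z : V) (T : Set V) (huv : u ≠ v) (hvT : v ∉ T) (hzT : z ∉ T)
    (hzu : z ≠ u) (hzv : z ≠ v)
    (hTadj : ∀ y ∈ T, G.Adj u y) (hNv : G.neighborSet v ⊆ T) : False := by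
  apply hstar (insert u T)
  constructor
  · exact ⟨u, Set.mem_insert _ _, fun y hy => by
      rcases hy with rfl | hy
      · exact Or.inl rfl
      · exact Or.inr (hTadj y hy)⟩
  · intro hconn
    have hv : v ∈ (insert u T)ᶜ := by
      simp only [Set.mem_compl_iff, Set.mem_insert_iff]
      push_neg
      exact ⟨fun h => huv h.symm, hvT⟩
    have hz : z ∈ (insert u T)ᶜ := by
      simp only [Set.mem_compl_iff, Set.mem_insert_iff]
      push_neg
      exact ⟨hzu, hzT⟩
    obtain ⟨w⟩ := hconn.preconnected ⟨v, hv⟩ ⟨z, hz⟩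
    have hne : (⟨v, hv⟩ : ((insert u T)ᶜ : Set V)) ≠ ⟨z, hz⟩ := by
      intro h
      exact hzv (congrArg Subtype.val h).symm
    have hnn : ¬ w.Nil := SimpleGraph.Walk.not_nil_of_ne hne
    have hadj := w.adj_snd hnn
    have hmem : ((w.getVert 1 : V)) ∈ T := hNv hadj
    have hb := (w.getVert 1).2
    simp only [Set.mem_compl_iff, Set.mem_insert_iff] at hb
    exact hb (Or.inr hmem)

/-- One half of stmt4. -/
private lemma half_aux {V : Type u} [Fintype V] (G : SimpleGraph V)
    (X1 X2 A1 A2 A3 A4 A5 A6 : Set V)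
    (hbip : Bipartite G)
    (hs : SixJoinSplit G X1 X2 A1 A2 A3 A4 A5 A6)
    (hstar : NoStarCutset G) :
    (X1 \ (A1 ∪ A3 ∪ A5)).Nonempty := by
  by_contra hne
  rw [Set.not_nonempty_iff_eq_empty, Set.diff_eq_empty] at hne
  obtain ⟨c⟩ := hbip
  obtain ⟨a1, ha1⟩ := hs.ne1
  obtain ⟨a2, ha2⟩ := hs.ne2
  obtain ⟨a3, ha3⟩ := hs.ne3
  obtain ⟨a4, ha4⟩ := hs.ne4
  obtain ⟨a5, ha5⟩ := hs.ne5
  obtain ⟨a6, ha6⟩ := hs.ne6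
  -- colors: every vertex of X1 gets a color ≠ c a2
  have hc4 : c a4 = c a2 :=
    fin2_aux _ _ _ (c.valid (hs.adj34 a3 ha3 a4 ha4)).symm (c.valid (hs.adj23 a2 ha2 a3 ha3))
  have hX1col : ∀ x ∈ X1, c x ≠ c a2 := by
    intro x hx
    rcases hne hx with (hA | hA) | hA
    · exact c.valid (hs.adj12 x hA a2 ha2)
    · exact fun h => c.valid (hs.adj23 a2 ha2 x hA) h.symm
    · intro h
      exact c.valid (hs.adj45 a4 ha4 x hA) (hc4.trans h.symm)
  have hindep : ∀ x ∈ X1, ∀ y ∈ X1, ¬ G.Adj x y := by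
    intro x hx y hy hadj
    exact c.valid hadj (fin2_aux _ _ _ (hX1col x hx) (hX1col y hy))
  -- disjointness helpers
  have hX12 : ∀ x ∈ X1, x ∉ X2 := fun x hx => Set.disjoint_left.mp hs.disj hx
  -- neighborhoods of vertices in A1, A3, A5
  have hN1 : ∀ u ∈ A1, G.neighborSet u ⊆ A2 ∪ A6 := by
    intro u hu w hw
    rcases hs.cover w with hw1 | hw2
    · exact absurd hw (hindep u (hs.sub1 hu) w hw1)
    · rcases hs.noOther u (hs.sub1 hu) w hw2 hw with ⟨_, h⟩ | ⟨_, h⟩ | ⟨h', _⟩ | ⟨h', _⟩ | ⟨h', _⟩ | ⟨h', _⟩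
      · exact Or.inl h
      · exact Or.inr h
      · exact absurd hu (Set.disjoint_right.mp hs.disj13 h')
      · exact absurd hu (Set.disjoint_right.mp hs.disj13 h')
      · exact absurd hu (Set.disjoint_right.mp hs.disj15 h')
      · exact absurd hu (Set.disjoint_right.mp hs.disj15 h')
  have hN3 : ∀ u ∈ A3, G.neighborSet u ⊆ A2 ∪ A4 := by
    intro u hu w hw
    rcases hs.cover w with hw1 | hw2
    · exact absurd hw (hindep u (hs.sub3 hu) w hw1)
    · rcases hs.noOther u (hs.sub3 hu) w hw2 hw with ⟨h', _⟩ | ⟨h', _⟩ | ⟨_, h⟩ | ⟨_, h⟩ | ⟨h', _⟩ | ⟨h', _⟩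
      · exact absurd hu (Set.disjoint_left.mp hs.disj13 h')
      · exact absurd hu (Set.disjoint_left.mp hs.disj13 h')
      · exact Or.inl h
      · exact Or.inr h
      · exact absurd hu (Set.disjoint_right.mp hs.disj35 h')
      · exact absurd hu (Set.disjoint_right.mp hs.disj35 h')
  have hN5 : ∀ u ∈ A5, G.neighborSet u ⊆ A4 ∪ A6 := by
    intro u hu w hw
    rcases hs.cover w with hw1 | hw2
    · exact absurd hw (hindep u (hs.sub5 hu) w hw1)
    · rcases hs.noOther u (hs.sub5 hu) w hw2 hw with ⟨h', _⟩ | ⟨h', _⟩ | ⟨h', _⟩ | ⟨h', _⟩ | ⟨_, h⟩ | ⟨_, h⟩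
      · exact absurd hu (Set.disjoint_left.mp hs.disj15 h')
      · exact absurd hu (Set.disjoint_left.mp hs.disj15 h')
      · exact absurd hu (Set.disjoint_left.mp hs.disj35 h')
      · exact absurd hu (Set.disjoint_left.mp hs.disj35 h')
      · exact Or.inl h
      · exact Or.inr h
  -- one of A1, A3, A5 has at least two elements
  have hbig : 1 < A1.ncard ∨ 1 < A3.ncard ∨ 1 < A5.ncard := by
    by_contra hcon
    push_neg at hcon
    obtain ⟨h1, h3, h5⟩ := hcon
    have hsub : X1 ⊆ A1 ∪ (A3 ∪ A5) := by
      intro x hx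
      rcases hne hx with (h | h) | h
      · exact Or.inl h
      · exact Or.inr (Or.inl h)
      · exact Or.inr (Or.inr h)
    have hle : X1.ncard ≤ (A1 ∪ (A3 ∪ A5)).ncard :=
      Set.ncard_le_ncard hsub (Set.toFinite _)
    have h2 : (A1 ∪ (A3 ∪ A5)).ncard ≤ A1.ncard + (A3.ncard + A5.ncard) :=
      le_trans (Set.ncard_union_le _ _)
        (by exact Nat.add_le_add_left (Set.ncard_union_le _ _) _)
    have := hs.card1
    omega
  rcases hbig with hb | hb | hb
  · obtain ⟨u, v, hu, hv, huv⟩ := (Set.one_lt_ncard_iff (Set.toFinite _)).mp hb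
    refine key_aux G hstar u v a3 (A2 ∪ A6) huv ?_ ?_ ?_ ?_ ?_ ?_
    · rintro (h | h)
      · exact hX12 v (hs.sub1 hv) (hs.sub2 h)
      · exact hX12 v (hs.sub1 hv) (hs.sub6 h)
    · rintro (h | h)
      · exact hX12 a3 (hs.sub3 ha3) (hs.sub2 h)
      · exact hX12 a3 (hs.sub3 ha3) (hs.sub6 h)
    · exact fun h => Set.disjoint_left.mp hs.disj13 (h ▸ hu) ha3
    · exact fun h => Set.disjoint_left.mp hs.disj13 (h ▸ hv) ha3
    · rintro y (h | h)
      · exact hs.adj12 u hu y h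
      · exact (hs.adj61 y h u hu).symm
    · exact hN1 v hv
  · obtain ⟨u, v, hu, hv, huv⟩ := (Set.one_lt_ncard_iff (Set.toFinite _)).mp hb
    refine key_aux G hstar u v a1 (A2 ∪ A4) huv ?_ ?_ ?_ ?_ ?_ ?_
    · rintro (h | h)
      · exact hX12 v (hs.sub3 hv) (hs.sub2 h)
      · exact hX12 v (hs.sub3 hv) (hs.sub4 h)
    · rintro (h | h)
      · exact hX12 a1 (hs.sub1 ha1) (hs.sub2 h)
      · exact hX12 a1 (hs.sub1 ha1) (hs.sub4 h)
    · exact fun h => Set.disjoint_left.mp hs.disj13 ha1 (h ▸ hu)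
    · exact fun h => Set.disjoint_left.mp hs.disj13 ha1 (h ▸ hv)
    · rintro y (h | h)
      · exact (hs.adj23 y h u hu).symm
      · exact hs.adj34 u hu y h
    · exact hN3 v hv
  · obtain ⟨u, v, hu, hv, huv⟩ := (Set.one_lt_ncard_iff (Set.toFinite _)).mp hb
    refine key_aux G hstar u v a1 (A4 ∪ A6) huv ?_ ?_ ?_ ?_ ?_ ?_
    · rintro (h | h)
      · exact hX12 v (hs.sub5 hv) (hs.sub4 h)
      · exact hX12 v (hs.sub5 hv) (hs.sub6 h)
    · rintro (h | h)
      · exact hX12 a1 (hs.sub1 ha1) (hs.sub4 h)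
      · exact hX12 a1 (hs.sub1 ha1) (hs.sub6 h)
    · exact fun h => Set.disjoint_left.mp hs.disj15 ha1 (h ▸ hu)
    · exact fun h => Set.disjoint_left.mp hs.disj15 ha1 (h ▸ hv)
    · rintro y (h | h)
      · exact (hs.adj45 y h u hu).symm
      · exact hs.adj56 u hu y h
    · exact hN5 v hv

/-- Rotated split: shift all labels by one. -/
private lemma rotate_aux {V : Type u} {G : SimpleGraph V}
    {X1 X2 A1 A2 A3 A4 A5 A6 : Set V}
    (hs : SixJoinSplit G X1 X2 A1 A2 A3 A4 A5 A6) :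
    SixJoinSplit G X2 X1 A2 A3 A4 A5 A6 A1 where
  cover v := (hs.cover v).symm
  disj := hs.disj.symm
  sub1 := hs.sub2
  sub3 := hs.sub4
  sub5 := hs.sub6
  sub2 := hs.sub3
  sub4 := hs.sub5
  sub6 := hs.sub1
  disj13 := hs.disj24
  disj15 := hs.disj26
  disj35 := hs.disj46
  disj24 := hs.disj35
  disj26 := hs.disj13.symm
  disj46 := hs.disj15.symm
  ne1 := hs.ne2
  ne2 := hs.ne3
  ne3 := hs.ne4
  ne4 := hs.ne5
  ne5 := hs.ne6
  ne6 := hs.ne1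
  adj12 := hs.adj23
  adj23 := hs.adj34
  adj34 := hs.adj45
  adj45 := hs.adj56
  adj56 := fun a ha b hb => (hs.adj61 a ha b hb)
  adj61 := fun a ha b hb => hs.adj12 a ha b hb
  noOther := by
    intro x hx y hy hadj
    rcases hs.noOther y hy x hx hadj.symm with ⟨h1, h2⟩ | ⟨h1, h2⟩ | ⟨h1, h2⟩ | ⟨h1, h2⟩ | ⟨h1, h2⟩ | ⟨h1, h2⟩
    · exact Or.inr (Or.inl ⟨h2, h1⟩)
    · exact Or.inr (Or.inr (Or.inr (Or.inr (Or.inr ⟨h2, h1⟩))))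
    · exact Or.inl ⟨h2, h1⟩
    · exact Or.inr (Or.inr (Or.inl ⟨h2, h1⟩))
    · exact Or.inr (Or.inr (Or.inr (Or.inl ⟨h2, h1⟩)))
    · exact Or.inr (Or.inr (Or.inr (Or.inr (Or.inl ⟨h2, h1⟩))))
  card1 := hs.card2
  card2 := hs.card1

/-- for a 6-join of a bipartite graph with no star cutset,
`X₁ \ (A₁ ∪ A₃ ∪ A₅)` and `X₂ \ (A₂ ∪ A₄ ∪ A₆)` are nonempty. -/
theorem stmt4 {V : Type u} [Fintype V] (G : SimpleGraph V)
    (X1 X2 A1 A2 A3 A4 A5 A6 : Set V)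
    (hbip : Bipartite G)
    (hsplit : SixJoinSplit G X1 X2 A1 A2 A3 A4 A5 A6)
    (hstar : NoStarCutset G) :
    (X1 \ (A1 ∪ A3 ∪ A5)).Nonempty ∧ (X2 \ (A2 ∪ A4 ∪ A6)).Nonempty := by
  exact ⟨half_aux G X1 X2 A1 A2 A3 A4 A5 A6 hbip hsplit hstar,
    half_aux G X2 X1 A2 A3 A4 A5 A6 A1 hbip (rotate_aux hsplit) hstar⟩
end

section
/- Let G be a bipartite graph with no star cutset and let (X₁,X₂,A₁,...,A₆) be a split of a 6-join of G. If C is a connected component of G[X₁ \ (A₁ ∪ A₃ ∪ A₅)], then for every i ∈ {1,3,5} some vertex of Aᵢ has a neighbor in C. -/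
open SimpleGraph

universe u

variable {V : Type u}

private lemma walk_pred {α : Type*} (H : SimpleGraph α) (P : α → Prop)
    (hP : ∀ a b, H.Adj a b → P a → P b) :
    ∀ {x y : α}, H.Walk x y → P x → P y := by
  intro x y w
  induction w with
  | nil => exact id
  | cons h _ ih => exact fun hx => ih (hP _ _ h hx)

private lemma key {V : Type u} (G : SimpleGraph V) (X1 X2 U B T : Set V)
    (astar a1 : V)
    (hcover : ∀ v, v ∈ X1 ∨ v ∈ X2)
    (hdisj : Disjoint X1 X2)
    (hUX1 : U ⊆ X1)
    (hBU : B ⊆ U)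
    (hTU : T ⊆ U)
    (hT : U ⊆ B ∪ T)
    (ha1 : a1 ∈ B)
    (hastar : astar ∈ X2)
    (hadj : ∀ t ∈ T, G.Adj astar t)
    (hno : ∀ x ∈ X1, ∀ y ∈ X2, G.Adj x y → x ∈ U)
    (ha1T : a1 ∉ T)
    (hstar : NoStarCutset G)
    (v : (X1 \ U : Set V)) :
    ∃ a ∈ B, ∃ w : (X1 \ U : Set V),
      (G.induce (X1 \ U)).Reachable v w ∧ G.Adj a (w : V) := by
  by_contra hcon
  push_neg at hcon
  apply hstar (insert astar T)
  constructor
  · refine ⟨astar, Set.mem_insert _ _, fun y hy => ?_⟩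
    rcases Set.mem_insert_iff.1 hy with rfl | hy
    · exact Or.inl rfl
    · exact Or.inr (hadj y hy)
  · intro hc
    have hvD : (v : V) ∈ X1 \ U := v.2
    have hvS : (v : V) ∈ (insert astar T)ᶜ := by
      intro h
      rcases Set.mem_insert_iff.1 h with h | h
      · exact Set.disjoint_left.1 hdisj hvD.1 (h ▸ hastar)
      · exact hvD.2 (hTU h)
    have ha1S : a1 ∈ (insert astar T)ᶜ := by
      intro h
      rcases Set.mem_insert_iff.1 h with h | h
      · exact Set.disjoint_left.1 hdisj (hUX1 (hBU ha1)) (h ▸ hastar)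
      · exact ha1T h
    have hreach := hc.preconnected ⟨(v : V), hvS⟩ ⟨a1, ha1S⟩
    obtain ⟨w⟩ := hreach
    have main := walk_pred (G.induce ((insert astar T)ᶜ))
      (fun u => ∃ h : (u : V) ∈ X1 \ U,
        (G.induce (X1 \ U)).Reachable v ⟨(u : V), h⟩)
      (by
        rintro a b hab ⟨haD, hr⟩
        have hab' : G.Adj (a : V) (b : V) := hab
        have hbX1 : (b : V) ∈ X1 := by
          rcases hcover (b : V) with h | h
          · exact h
          · exact absurd (hno _ haD.1 _ h hab') haD.2
        have hbU : (b : V) ∉ U := by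
          intro hU
          rcases hT hU with hB | hTm
          · exact hcon _ hB ⟨(a : V), haD⟩ hr hab'.symm
          · exact b.2 (Set.mem_insert_of_mem _ hTm)
        have hbD : (b : V) ∈ X1 \ U := ⟨hbX1, hbU⟩
        refine ⟨hbD, hr.trans (SimpleGraph.Adj.reachable ?_)⟩
        exact hab')
      w ⟨hvD, SimpleGraph.Reachable.refl _⟩
    obtain ⟨hD, -⟩ := main
    exact hD.2 (hBU ha1)

/-- for a 6-join of a bipartite graph with no star cutset, every connected
component of `G[X₁ \ (A₁ ∪ A₃ ∪ A₅)]` has a neighbor of some vertex of `Aᵢ`, for each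
`i ∈ {1,3,5}`. -/
theorem stmt5 {V : Type u} [Fintype V] (G : SimpleGraph V)
    (X1 X2 A1 A2 A3 A4 A5 A6 : Set V)
    (hbip : Bipartite G)
    (hsplit : SixJoinSplit G X1 X2 A1 A2 A3 A4 A5 A6)
    (hstar : NoStarCutset G) :
    ∀ v : (X1 \ (A1 ∪ A3 ∪ A5) : Set V),
      (∃ a ∈ A1, ∃ w : (X1 \ (A1 ∪ A3 ∪ A5) : Set V),
        (G.induce (X1 \ (A1 ∪ A3 ∪ A5))).Reachable v w ∧ G.Adj a (w : V)) ∧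
      (∃ a ∈ A3, ∃ w : (X1 \ (A1 ∪ A3 ∪ A5) : Set V),
        (G.induce (X1 \ (A1 ∪ A3 ∪ A5))).Reachable v w ∧ G.Adj a (w : V)) ∧
      (∃ a ∈ A5, ∃ w : (X1 \ (A1 ∪ A3 ∪ A5) : Set V),
        (G.induce (X1 \ (A1 ∪ A3 ∪ A5))).Reachable v w ∧ G.Adj a (w : V)) := by
  intro v
  have hU13 : A1 ⊆ A1 ∪ A3 ∪ A5 := fun x hx => Or.inl (Or.inl hx)
  have hU3 : A3 ⊆ A1 ∪ A3 ∪ A5 := fun x hx => Or.inl (Or.inr hx)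
  have hU5 : A5 ⊆ A1 ∪ A3 ∪ A5 := fun x hx => Or.inr hx
  have hUX1 : A1 ∪ A3 ∪ A5 ⊆ X1 := by
    rintro x ((h | h) | h)
    · exact hsplit.sub1 h
    · exact hsplit.sub3 h
    · exact hsplit.sub5 h
  have hno : ∀ x ∈ X1, ∀ y ∈ X2, G.Adj x y → x ∈ A1 ∪ A3 ∪ A5 := by
    intro x hx y hy hadj
    rcases hsplit.noOther x hx y hy hadj with ⟨h,-⟩|⟨h,-⟩|⟨h,-⟩|⟨h,-⟩|⟨h,-⟩|⟨h,-⟩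
    · exact hU13 h
    · exact hU13 h
    · exact hU3 h
    · exact hU3 h
    · exact hU5 h
    · exact hU5 h
  obtain ⟨a1, ha1⟩ := hsplit.ne1
  obtain ⟨a2, ha2⟩ := hsplit.ne2
  obtain ⟨a3, ha3⟩ := hsplit.ne3
  obtain ⟨a4, ha4⟩ := hsplit.ne4
  obtain ⟨a5, ha5⟩ := hsplit.ne5
  obtain ⟨a6, ha6⟩ := hsplit.ne6
  refine ⟨?_, ?_, ?_⟩
  · refine key G X1 X2 (A1 ∪ A3 ∪ A5) A1 (A3 ∪ A5) a4 a1 hsplit.cover hsplit.disj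
      hUX1 hU13 ?_ ?_ ha1 (hsplit.sub4 ha4) ?_ hno ?_ hstar v
    · rintro x (h | h)
      · exact hU3 h
      · exact hU5 h
    · rintro x ((h | h) | h)
      · exact Or.inl h
      · exact Or.inr (Or.inl h)
      · exact Or.inr (Or.inr h)
    · rintro t (h | h)
      · exact (hsplit.adj34 t h a4 ha4).symm
      · exact hsplit.adj45 a4 ha4 t h
    · rintro (h | h)
      · exact Set.disjoint_left.1 hsplit.disj13 ha1 h
      · exact Set.disjoint_left.1 hsplit.disj15 ha1 h
  · refine key G X1 X2 (A1 ∪ A3 ∪ A5) A3 (A1 ∪ A5) a6 a3 hsplit.cover hsplit.disj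
      hUX1 hU3 ?_ ?_ ha3 (hsplit.sub6 ha6) ?_ hno ?_ hstar v
    · rintro x (h | h)
      · exact hU13 h
      · exact hU5 h
    · rintro x ((h | h) | h)
      · exact Or.inr (Or.inl h)
      · exact Or.inl h
      · exact Or.inr (Or.inr h)
    · rintro t (h | h)
      · exact hsplit.adj61 a6 ha6 t h
      · exact (hsplit.adj56 t h a6 ha6).symm
    · rintro (h | h)
      · exact Set.disjoint_left.1 hsplit.disj13 h ha3
      · exact Set.disjoint_left.1 hsplit.disj35 ha3 h
  · refine key G X1 X2 (A1 ∪ A3 ∪ A5) A5 (A1 ∪ A3) a2 a5 hsplit.cover hsplit.disj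
      hUX1 hU5 ?_ ?_ ha5 (hsplit.sub2 ha2) ?_ hno ?_ hstar v
    · rintro x (h | h)
      · exact hU13 h
      · exact hU3 h
    · rintro x ((h | h) | h)
      · exact Or.inr (Or.inl h)
      · exact Or.inr (Or.inr h)
      · exact Or.inl h
    · rintro t (h | h)
      · exact (hsplit.adj12 t h a2 ha2).symm
      · exact hsplit.adj23 a2 ha2 t h
    · rintro (h | h)
      · exact Set.disjoint_left.1 hsplit.disj15 h ha5
      · exact Set.disjoint_left.1 hsplit.disj35 h ha5
end

section
/- Let G be a bipartite graph with no star cutset that has a 6-join with split (X₁,X₂,A₁,...,A₆). If G is 4-hole-free or has maximum degree at most 3, then |Aᵢ| = 1 for every i ∈ {1,...,6}, and every vertex of A₁ ∪ ... ∪ A₆ has degree at least 3 in G. -/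
open SimpleGraph

universe u

variable {V : Type u}

section Aux

variable {V : Type u}

lemma bip_common {G : SimpleGraph V} (hbip : Bipartite G) {a b c : V}
    (h1 : G.Adj a c) (h2 : G.Adj b c) : ¬ G.Adj a b := by
  obtain ⟨C⟩ := hbip
  intro h
  have key : ∀ x y z : Fin 2, x ≠ z → y ≠ z → x = y := by decide
  exact C.valid h (key _ _ _ (C.valid h1) (C.valid h2))

lemma walk_closed {G : SimpleGraph V} {W Y : Set V}
    (closed : ∀ ⦃y⦄, y ∈ Y → ∀ ⦃t⦄, t ∈ W → G.Adj y t → t ∈ Y) :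
    ∀ {u v : ↥W} (_ : (G.induce W).Walk u v), (u : V) ∈ Y → (v : V) ∈ Y := by
  intro u v p
  induction p with
  | nil => exact id
  | @cons u v w h p ih =>
    intro hu
    have hadj : G.Adj (u : V) (v : V) := by simpa using h
    exact ih (closed hu v.2 hadj)

lemma not_conn {G : SimpleGraph V} {W Y : Set V}
    (closed : ∀ ⦃y⦄, y ∈ Y → ∀ ⦃t⦄, t ∈ W → G.Adj y t → t ∈ Y)
    {u v : V} (hu : u ∈ Y) (huW : u ∈ W) (hvW : v ∈ W) (hvY : v ∉ Y) :
    ¬ (G.induce W).Connected := by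
  intro hc
  obtain ⟨p⟩ := hc.preconnected ⟨u, huW⟩ ⟨v, hvW⟩
  exact hvY (walk_closed closed p hu)

lemma star_kill {G : SimpleGraph V} (hstar : NoStarCutset G) (x : V) (R : Set V)
    (hR : ∀ y ∈ R, G.Adj x y)
    (hdisc : ¬ (G.induce (({x} ∪ R)ᶜ)).Connected) : False := by
  refine hstar ({x} ∪ R) ⟨⟨x, Or.inl rfl, ?_⟩, hdisc⟩
  rintro y (rfl | hy)
  · exact Or.inl rfl
  · exact Or.inr (hR y hy)

lemma mem_compl_union {x : V} {R : Set V} {z : V} (h1 : z ≠ x) (h2 : z ∉ R) :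
    z ∈ ({x} ∪ R)ᶜ := by
  simp [Set.mem_compl_iff, h1, h2]

lemma SixJoinSplit.rotate {G : SimpleGraph V} {X1 X2 A1 A2 A3 A4 A5 A6 : Set V}
    (h : SixJoinSplit G X1 X2 A1 A2 A3 A4 A5 A6) :
    SixJoinSplit G X2 X1 A2 A3 A4 A5 A6 A1 where
  cover v := (h.cover v).symm
  disj := h.disj.symm
  sub1 := h.sub2
  sub3 := h.sub4
  sub5 := h.sub6
  sub2 := h.sub3
  sub4 := h.sub5
  sub6 := h.sub1
  disj13 := h.disj24
  disj15 := h.disj26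
  disj35 := h.disj46
  disj24 := h.disj35
  disj26 := h.disj13.symm
  disj46 := h.disj15.symm
  ne1 := h.ne2
  ne2 := h.ne3
  ne3 := h.ne4
  ne4 := h.ne5
  ne5 := h.ne6
  ne6 := h.ne1
  adj12 := h.adj23
  adj23 := h.adj34
  adj34 := h.adj45
  adj45 := h.adj56
  adj56 := h.adj61
  adj61 := h.adj12
  noOther := by
    intro x hx y hy hxy
    rcases h.noOther y hy x hx hxy.symm with ⟨h1, h2⟩ | ⟨h1, h2⟩ | ⟨h1, h2⟩ | ⟨h1, h2⟩ |
      ⟨h1, h2⟩ | ⟨h1, h2⟩ <;> tauto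
  card1 := h.card2
  card2 := h.card1

variable {G : SimpleGraph V} {X1 X2 A1 A2 A3 A4 A5 A6 : Set V}

lemma SixJoinSplit.not_adj_14 (h : SixJoinSplit G X1 X2 A1 A2 A3 A4 A5 A6)
    {a d : V} (ha : a ∈ A1) (hd : d ∈ A4) : ¬ G.Adj a d := by
  intro hadj
  rcases h.noOther a (h.sub1 ha) d (h.sub4 hd) hadj with ⟨_, h2⟩ | ⟨_, h2⟩ | ⟨h1, _⟩ |
    ⟨h1, _⟩ | ⟨h1, _⟩ | ⟨h1, _⟩
  · exact Set.disjoint_left.mp h.disj24 h2 hd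
  · exact Set.disjoint_left.mp h.disj46 hd h2
  · exact Set.disjoint_left.mp h.disj13 ha h1
  · exact Set.disjoint_left.mp h.disj13 ha h1
  · exact Set.disjoint_left.mp h.disj15 ha h1
  · exact Set.disjoint_left.mp h.disj15 ha h1

lemma SixJoinSplit.side (h : SixJoinSplit G X1 X2 A1 A2 A3 A4 A5 A6)
    {x y : V} (hx : x ∈ X1) (hy : y ∈ X2) : x ≠ y := by
  rintro rfl
  exact Set.disjoint_left.mp h.disj hx hy

/-- Part 2: all vertices in `A1` have degree at least 3, assuming all six sets are
singletons. -/
lemma SixJoinSplit.degA1 [Fintype V] (h : SixJoinSplit G X1 X2 A1 A2 A3 A4 A5 A6)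
    (hstar : NoStarCutset G)
    (c1 : A1.ncard = 1) (c2 : A2.ncard = 1) (c3 : A3.ncard = 1)
    (c4 : A4.ncard = 1) (c5 : A5.ncard = 1) (c6 : A6.ncard = 1) :
    ∀ v ∈ A1, 3 ≤ deg G v := by
  intro a1 ha1
  by_contra hlt
  push_neg at hlt
  obtain ⟨a2, ha2⟩ := h.ne2
  obtain ⟨a4, ha4⟩ := h.ne4
  obtain ⟨a6, ha6⟩ := h.ne6
  -- N(a1) = {a2, a6}
  have hsub : ({a2, a6} : Set V) ⊆ G.neighborSet a1 := by
    rintro t (rfl | rfl)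
    · exact h.adj12 a1 ha1 _ ha2
    · exact (h.adj61 _ ha6 a1 ha1).symm
  have ha26 : a2 ≠ a6 := fun e => Set.disjoint_left.mp h.disj26 ha2 (e ▸ ha6)
  have hNa1 : G.neighborSet a1 = {a2, a6} := by
    refine (Set.eq_of_subset_of_ncard_le hsub ?_).symm
    have h2 : ({a2, a6} : Set V).ncard = 2 := Set.ncard_pair ha26
    have : (G.neighborSet a1).ncard ≤ 2 := by
      have := hlt
      unfold deg at this
      omega
    omega
  -- the star cutset at a4
  apply star_kill hstar a4 (G.neighborSet a4) (fun y hy => hy)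
  set S : Set V := {a4} ∪ G.neighborSet a4 with hS
  set Y : Set V := X1 \ (A1 ∪ A3 ∪ A5) with hY
  -- Y is nonempty
  obtain ⟨x1, hx1⟩ := Set.ncard_eq_one.mp c1
  obtain ⟨x3, hx3⟩ := Set.ncard_eq_one.mp c3
  obtain ⟨x5, hx5⟩ := Set.ncard_eq_one.mp c5
  have hYne : Y.Nonempty := by
    rcases Y.eq_empty_or_nonempty with he | hne
    · exfalso
      have hsub2 : X1 ⊆ {x1, x3, x5} := by
        intro z hz
        have : z ∉ X1 \ (A1 ∪ A3 ∪ A5) := by rw [← hY, he]; exact Set.notMem_empty z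
        have hz2 : z ∈ A1 ∪ A3 ∪ A5 := by
          by_contra hc
          exact this ⟨hz, hc⟩
        rcases hz2 with (hz2 | hz2) | hz2
        · exact Or.inl (by rw [hx1] at hz2; exact hz2)
        · exact Or.inr (Or.inl (by rw [hx3] at hz2; exact hz2))
        · exact Or.inr (Or.inr (by rw [hx5] at hz2; exact hz2))
      have := Set.ncard_le_ncard hsub2 (Set.toFinite _)
      have h3 : ({x1, x3, x5} : Set V).ncard ≤ 3 := by
        apply le_trans (Set.ncard_insert_le _ _)
        have := Set.ncard_insert_le x3 ({x5} : Set V)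
        simp at this ⊢
        omega
      have := h.card1
      omega
    · exact hne
  obtain ⟨p, hp⟩ := hYne
  have hpW : p ∈ Sᶜ := by
    have hpX1 : p ∈ X1 := hp.1
    have hpA : p ∉ A1 ∪ A3 ∪ A5 := hp.2
    apply mem_compl_union (h.side hpX1 (h.sub4 ha4))
    intro hpN
    have hadj : G.Adj p a4 := hpN.symm
    rcases h.noOther p hpX1 a4 (h.sub4 ha4) hadj with ⟨h1, _⟩ | ⟨h1, _⟩ | ⟨h1, _⟩ |
      ⟨h1, _⟩ | ⟨h1, _⟩ | ⟨h1, _⟩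
    · exact hpA (Or.inl (Or.inl h1))
    · exact hpA (Or.inl (Or.inl h1))
    · exact hpA (Or.inl (Or.inr h1))
    · exact hpA (Or.inl (Or.inr h1))
    · exact hpA (Or.inr h1)
    · exact hpA (Or.inr h1)
  have closed : ∀ ⦃y⦄, y ∈ Y → ∀ ⦃t⦄, t ∈ Sᶜ → G.Adj y t → t ∈ Y := by
    intro y hy t htW hadj
    obtain ⟨hyX1, hyA⟩ := hy
    rcases h.cover t with htX1 | htX2
    · -- t stays in X1; show t avoids A1 ∪ A3 ∪ A5
      refine ⟨htX1, ?_⟩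
      rintro ((ht1 | ht3) | ht5)
      · -- t ∈ A1, so t = a1, but then y ∈ N(a1) = {a2, a6} ⊆ X2
        have : t = a1 := by
          obtain ⟨x1', hx1'⟩ := Set.ncard_eq_one.mp c1
          rw [hx1'] at ht1 ha1; rw [ht1, ha1]
        subst this
        have hyN : y ∈ G.neighborSet t := hadj.symm
        rw [hNa1] at hyN
        rcases hyN with rfl | rfl
        · exact h.side hyX1 (h.sub2 ha2) rfl
        · exact h.side hyX1 (h.sub6 ha6) rfl
      · -- t ∈ A3 ⊆ N(a4) ⊆ S
        exact htW (Or.inr ((h.adj34 t ht3 a4 ha4).symm : G.Adj a4 t))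
      · exact htW (Or.inr ((h.adj45 a4 ha4 t ht5) : G.Adj a4 t))
    · -- t ∈ X2 : impossible, y would be a crossing vertex
      exfalso
      rcases h.noOther y hyX1 t htX2 hadj with ⟨h1, _⟩ | ⟨h1, _⟩ | ⟨h1, _⟩ |
        ⟨h1, _⟩ | ⟨h1, _⟩ | ⟨h1, _⟩
      · exact hyA (Or.inl (Or.inl h1))
      · exact hyA (Or.inl (Or.inl h1))
      · exact hyA (Or.inl (Or.inr h1))
      · exact hyA (Or.inl (Or.inr h1))
      · exact hyA (Or.inr h1)
      · exact hyA (Or.inr h1)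
  have ha1W : a1 ∈ Sᶜ := by
    apply mem_compl_union (h.side (h.sub1 ha1) (h.sub4 ha4))
    intro hN
    exact h.not_adj_14 ha1 ha4 (hN.symm : G.Adj a1 a4)
  exact not_conn closed hp hpW ha1W (fun hY' => hY'.2 (Or.inl (Or.inl ha1)))

/-- Part 1: `A1` is a singleton. -/
lemma SixJoinSplit.singletonA1 [Fintype V] (hbip : Bipartite G)
    (h : SixJoinSplit G X1 X2 A1 A2 A3 A4 A5 A6) (hstar : NoStarCutset G)
    (hcase : FourHoleFree G ∨ ∀ v, deg G v ≤ 3) : A1.ncard = 1 := by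
  by_contra hne
  have hpos : 0 < A1.ncard := (Set.ncard_pos (Set.toFinite _)).mpr h.ne1
  have h2 : 1 < A1.ncard := by omega
  obtain ⟨a, haA, a', ha'A, haa'⟩ := (Set.one_lt_ncard (Set.toFinite _)).mp h2
  obtain ⟨b, hbA⟩ := h.ne2
  obtain ⟨c, hcA⟩ := h.ne6
  have hab : G.Adj a b := h.adj12 a haA b hbA
  have ha'b : G.Adj a' b := h.adj12 a' ha'A b hbA
  have hca : G.Adj c a := h.adj61 c hcA a haA
  have hca' : G.Adj c a' := h.adj61 c hcA a' ha'A
  have hnaa' : ¬ G.Adj a a' := bip_common hbip hab ha'b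
  have hnbc : ¬ G.Adj b c := bip_common hbip hab.symm hca
  have hax : a ∈ X1 := h.sub1 haA
  have ha'x : a' ∈ X1 := h.sub1 ha'A
  have hbx : b ∈ X2 := h.sub2 hbA
  have hcx : c ∈ X2 := h.sub6 hcA
  have hne_ab : a ≠ b := h.side hax hbx
  have hne_ac : a ≠ c := h.side hax hcx
  have hne_a'b : a' ≠ b := h.side ha'x hbx
  have hne_a'c : a' ≠ c := h.side ha'x hcx
  have hne_bc : b ≠ c := fun e => Set.disjoint_left.mp h.disj26 hbA (e ▸ hcA)
  rcases hcase with h4 | hdeg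
  · -- 4-hole-free case : a-b-a'-c-a is a 4-hole
    refine h4 a (Walk.cons hab (Walk.cons ha'b.symm (Walk.cons hca'.symm
      (Walk.cons hca Walk.nil)))) ⟨?_, ?_, ?_⟩ ?_
    · rw [Walk.isCycle_def]
      refine ⟨?_, by simp, ?_⟩
      · rw [Walk.isTrail_def]
        simp [Sym2.eq_iff, hne_ab, hne_ac, hne_a'b, hne_a'c, hne_bc, haa',
          hne_ab.symm, hne_ac.symm, hne_a'b.symm, hne_a'c.symm, hne_bc.symm, haa'.symm]
      · simp [hne_ab, hne_ac, hne_a'b, hne_a'c, hne_bc, haa',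
          hne_ab.symm, hne_ac.symm, hne_a'b.symm, hne_a'c.symm, hne_bc.symm, haa'.symm]
    · simp
    · intro x y hx hy hxy
      simp only [Walk.support_cons, Walk.support_nil, List.mem_cons,
        List.not_mem_nil, or_false] at hx hy
      simp only [Walk.edges_cons, Walk.edges_nil, List.mem_cons, List.not_mem_nil, or_false]
      rcases hx with rfl | rfl | rfl | rfl | rfl <;> rcases hy with rfl | rfl | rfl | rfl | rfl <;>
        first
          | exact absurd rfl hxy.ne
          | exact absurd hxy hnaa'
          | exact absurd hxy.symm hnaa'
          | exact absurd hxy hnbc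
          | exact absurd hxy.symm hnbc
          | simp [Sym2.eq_iff]
    · simp
  · -- subcubic case
    have hdegset : ∀ v : V, (G.neighborSet v).ncard ≤ 3 := fun v => hdeg v
    have hNb : ∀ b' ∈ A2, G.neighborSet b' = A1 ∪ A3 := by
      intro b' hb'
      have hsub : A1 ∪ A3 ⊆ G.neighborSet b' := by
        rintro t (ht | ht)
        · exact (h.adj12 t ht b' hb').symm
        · exact h.adj23 b' hb' t ht
      refine (Set.eq_of_subset_of_ncard_le hsub ?_).symm
      have e1 : (A1 ∪ A3).ncard = A1.ncard + A3.ncard := Set.ncard_union_eq h.disj13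
      have e3 : 0 < A3.ncard := (Set.ncard_pos (Set.toFinite _)).mpr h.ne3
      have := hdegset b'
      omega
    have hNc : ∀ c' ∈ A6, G.neighborSet c' = A1 ∪ A5 := by
      intro c' hc'
      have hsub : A1 ∪ A5 ⊆ G.neighborSet c' := by
        rintro t (ht | ht)
        · exact h.adj61 c' hc' t ht
        · exact (h.adj56 t ht c' hc').symm
      refine (Set.eq_of_subset_of_ncard_le hsub ?_).symm
      have e1 : (A1 ∪ A5).ncard = A1.ncard + A5.ncard := Set.ncard_union_eq h.disj15
      have e5 : 0 < A5.ncard := (Set.ncard_pos (Set.toFinite _)).mpr h.ne5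
      have := hdegset c'
      omega
    have hcard3 : A3.ncard = 1 := by
      have e := hNb b hbA
      have hd3 : (G.neighborSet b).ncard ≤ 3 := hdegset b
      rw [e, Set.ncard_union_eq h.disj13] at hd3
      have e3 : 0 < A3.ncard := (Set.ncard_pos (Set.toFinite _)).mpr h.ne3
      omega
    have hcard5 : A5.ncard = 1 := by
      have e := hNc c hcA
      have hd5 : (G.neighborSet c).ncard ≤ 3 := hdegset c
      rw [e, Set.ncard_union_eq h.disj15] at hd5
      have e5 : 0 < A5.ncard := (Set.ncard_pos (Set.toFinite _)).mpr h.ne5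
      omega
    obtain ⟨u3, hu3⟩ : ∃ x, A3 = {x} := Set.ncard_eq_one.mp hcard3
    obtain ⟨u5, hu5⟩ : ∃ x, A5 = {x} := Set.ncard_eq_one.mp hcard5
    have hu3A : u3 ∈ A3 := by rw [hu3]; rfl
    have hu5A : u5 ∈ A5 := by rw [hu5]; rfl
    by_cases hA26 : 3 ≤ A2.ncard + A6.ncard
    · -- vertices of A1 are twins: star cutset isolating a'
      have hNa : ∀ x ∈ A1, G.neighborSet x = A2 ∪ A6 := by
        intro x hx
        have hsub : A2 ∪ A6 ⊆ G.neighborSet x := by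
          rintro t (ht | ht)
          · exact h.adj12 x hx t ht
          · exact (h.adj61 t ht x hx).symm
        refine (Set.eq_of_subset_of_ncard_le hsub ?_).symm
        have e1 : (A2 ∪ A6).ncard = A2.ncard + A6.ncard := Set.ncard_union_eq h.disj26
        have := hdegset x
        omega
      apply star_kill hstar a (G.neighborSet a) (fun y hy => hy)
      have closed : ∀ ⦃y⦄, y ∈ ({a'} : Set V) → ∀ ⦃t⦄, t ∈ ({a} ∪ G.neighborSet a)ᶜ →
          G.Adj y t → t ∈ ({a'} : Set V) := by
        intro y hy t htW hadj
        exfalso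
        rw [Set.mem_singleton_iff] at hy
        subst hy
        have ht' : t ∈ G.neighborSet y := hadj
        rw [hNa y ha'A, ← hNa a haA] at ht'
        exact htW (Or.inr ht')
      refine not_conn (v := u3) closed rfl ?_ ?_ ?_
      · apply mem_compl_union haa'.symm
        intro hN
        rw [hNa a haA] at hN
        rcases hN with h' | h'
        · exact h.side ha'x (h.sub2 h') rfl
        · exact h.side ha'x (h.sub6 h') rfl
      · apply mem_compl_union (fun e : u3 = a => Set.disjoint_left.mp h.disj13 haA (e ▸ hu3A))
        intro hN
        rw [hNa a haA] at hN
        rcases hN with h' | h'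
        · exact h.side (h.sub3 hu3A) (h.sub2 h') rfl
        · exact h.side (h.sub3 hu3A) (h.sub6 h') rfl
      · intro e'
        rw [Set.mem_singleton_iff] at e'
        exact Set.disjoint_left.mp h.disj13 ha'A (e' ▸ hu3A)
    · -- A2 and A6 are singletons
      have p2 := (Set.ncard_pos (Set.toFinite _)).mpr h.ne2
      have p6 := (Set.ncard_pos (Set.toFinite _)).mpr h.ne6
      have e2 : A2.ncard = 1 := by omega
      have e6 : A6.ncard = 1 := by omega
      obtain ⟨b0, hA2⟩ := Set.ncard_eq_one.mp e2
      rw [hA2, Set.mem_singleton_iff] at hbA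
      subst hbA
      obtain ⟨c0, hA6⟩ := Set.ncard_eq_one.mp e6
      rw [hA6, Set.mem_singleton_iff] at hcA
      subst hcA
      obtain ⟨d, hdA⟩ := h.ne4
      have hadj_du3 : G.Adj d u3 := (h.adj34 u3 hu3A d hdA).symm
      have hadj_du5 : G.Adj d u5 := h.adj45 d hdA u5 hu5A
      have hdX2 : d ∈ X2 := h.sub4 hdA
      have hNbX1 : ∀ z, G.Adj b z → z ∈ X1 := by
        intro z hz
        have hz' : z ∈ G.neighborSet b := hz
        rw [hNb b (by rw [hA2]; rfl)] at hz'
        rcases hz' with h' | h'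
        · exact h.sub1 h'
        · exact h.sub3 h'
      have hNcX1 : ∀ z, G.Adj c z → z ∈ X1 := by
        intro z hz
        have hz' : z ∈ G.neighborSet c := hz
        rw [hNc c (by rw [hA6]; rfl)] at hz'
        rcases hz' with h' | h'
        · exact h.sub1 h'
        · exact h.sub5 h'
      set S : Set V := {d} ∪ G.neighborSet d with hSdef
      set Yset : Set V := (X2 \ {b, c}) \ S with hYdef
      rcases Yset.eq_empty_or_nonempty with hYe | ⟨y0, hy0⟩
      · -- Yset empty: A4 = {d}, analyze E = N(d) ∩ X2
        have hmemY : ∀ z, z ∈ X2 → z ≠ b → z ≠ c → z ∈ S := by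
          intro z hz hz1 hz2
          by_contra hS
          have : z ∈ Yset := ⟨⟨hz, by simp [hz1, hz2]⟩, hS⟩
          rw [hYe] at this
          exact Set.notMem_empty z this
        have hA4d : A4 = {d} := by
          apply Set.Subset.antisymm
          · intro d' hd'
            rw [Set.mem_singleton_iff]
            by_contra hne'
            have hd'b2 : d' ≠ b := fun e => by
              have : b ∈ A4 := e ▸ hd'
              have : b ∈ A2 := by rw [hA2]; rfl
              exact Set.disjoint_left.mp h.disj24 this (e ▸ hd')
            have hd'c : d' ≠ c := fun e => by
              have hc6 : c ∈ A6 := by rw [hA6]; rfl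
              exact Set.disjoint_left.mp h.disj46 (e ▸ hd') hc6
            have := hmemY d' (h.sub4 hd') hd'b2 hd'c
            rcases this with h' | h'
            · exact hne' h'
            · exact bip_common hbip hadj_du3 ((h.adj34 u3 hu3A d' hd').symm) h'
          · intro z hz
            rw [Set.mem_singleton_iff] at hz
            subst hz
            exact hdA
        have hEcard : (G.neighborSet d ∩ X2).ncard ≤ 1 := by
          have hsubN : ({u3, u5} : Set V) ∪ (G.neighborSet d ∩ X2) ⊆ G.neighborSet d := by
            rintro t ((rfl | rfl) | ht)
            · exact hadj_du3
            · exact hadj_du5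
            · exact ht.1
          have hdisjN : Disjoint ({u3, u5} : Set V) (G.neighborSet d ∩ X2) := by
            rw [Set.disjoint_left]
            rintro t (rfl | rfl) ht
            · exact h.side (h.sub3 hu3A) ht.2 rfl
            · exact h.side (h.sub5 hu5A) ht.2 rfl
          have hu35 : u3 ≠ u5 := fun e => Set.disjoint_left.mp h.disj35 hu3A (e ▸ hu5A)
          have hp : ({u3, u5} : Set V).ncard = 2 := Set.ncard_pair hu35
          have hle := Set.ncard_le_ncard hsubN (Set.toFinite _)
          rw [Set.ncard_union_eq hdisjN, hp] at hle
          have := hdegset d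
          omega
        have hX2sub : X2 ⊆ {b, c, d} ∪ (G.neighborSet d ∩ X2) := by
          intro z hz
          by_cases hzb : z = b
          · exact Or.inl (by simp [hzb])
          by_cases hzc : z = c
          · exact Or.inl (by simp [hzc])
          rcases hmemY z hz hzb hzc with h' | h'
          · exact Or.inl (by simp [h'])
          · exact Or.inr ⟨h', hz⟩
        rcases (G.neighborSet d ∩ X2).eq_empty_or_nonempty with hEe | ⟨e, heE⟩
        · -- X2 ⊆ {b,c,d}: contradicts |X2| ≥ 4
          rw [hEe, Set.union_empty] at hX2sub
          have hle := Set.ncard_le_ncard hX2sub (Set.toFinite _)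
          have h3 : ({b, c, d} : Set V).ncard ≤ 3 := by
            apply le_trans (Set.ncard_insert_le _ _)
            have h3' : ({c, d} : Set V).ncard ≤ 2 := by
              apply le_trans (Set.ncard_insert_le _ _)
              simp
            omega
          have := h.card2
          omega
        · -- E = {e}, e has degree ≤ 1 : isolated after removing {d, u3, u5}
          have hadj_de : G.Adj d e := heE.1
          have heX2 : e ∈ X2 := heE.2
          have heb : e ≠ b := by
            rintro rfl
            exact h.side (hNbX1 d hadj_de.symm) hdX2 rfl
          have hec : e ≠ c := by
            rintro rfl
            exact h.side (hNcX1 d hadj_de.symm) hdX2 rfl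
          have hed : e ≠ d := (hadj_de.ne).symm
          have hEuniq : ∀ z ∈ G.neighborSet d ∩ X2, z = e := by
            intro z hz
            by_contra hne'
            have : 1 < (G.neighborSet d ∩ X2).ncard :=
              (Set.one_lt_ncard (Set.toFinite _)).mpr ⟨z, hz, e, heE, hne'⟩
            omega
          have hNe : ∀ t, G.Adj e t → t = d := by
            intro t ht
            rcases h.cover t with htX1 | htX2
            · exfalso
              rcases h.noOther t htX1 e heX2 ht.symm with ⟨_, h'⟩ | ⟨_, h'⟩ | ⟨_, h'⟩ |
                ⟨_, h'⟩ | ⟨_, h'⟩ | ⟨_, h'⟩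
              · exact heb (by rw [hA2, Set.mem_singleton_iff] at h'; exact h')
              · exact hec (by rw [hA6, Set.mem_singleton_iff] at h'; exact h')
              · exact heb (by rw [hA2, Set.mem_singleton_iff] at h'; exact h')
              · exact hed (by rw [hA4d, Set.mem_singleton_iff] at h'; exact h')
              · exact hed (by rw [hA4d, Set.mem_singleton_iff] at h'; exact h')
              · exact hec (by rw [hA6, Set.mem_singleton_iff] at h'; exact h')
            · rcases hX2sub htX2 with h' | h'
              · rcases h' with rfl | h'
                · exact absurd (h.side (hNbX1 e ht.symm) heX2) (fun q => q rfl)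
                · rcases h' with rfl | h'
                  · exact absurd (h.side (hNcX1 e ht.symm) heX2) (fun q => q rfl)
                  · rw [Set.mem_singleton_iff] at h'
                    exact h'
              · have heq := hEuniq t h'
                subst heq
                exact ((ht.ne) rfl).elim
          apply star_kill hstar d ({u3, u5} : Set V) ?_
          · have closed : ∀ ⦃y⦄, y ∈ ({e} : Set V) → ∀ ⦃t⦄,
                t ∈ (({d} : Set V) ∪ {u3, u5})ᶜ → G.Adj y t → t ∈ ({e} : Set V) := by
              intro y hy t htW hadj'
              exfalso
              rw [Set.mem_singleton_iff] at hy
              subst hy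
              exact htW (Or.inl (by rw [hNe t hadj']; rfl))
            refine not_conn (v := a) closed rfl ?_ ?_ ?_
            · apply mem_compl_union hed
              rintro (rfl | rfl)
              · exact h.side (h.sub3 hu3A) heX2 rfl
              · exact h.side (h.sub5 hu5A) heX2 rfl
            · apply mem_compl_union (h.side hax hdX2)
              rintro (rfl | rfl)
              · exact Set.disjoint_left.mp h.disj13 haA hu3A
              · exact Set.disjoint_left.mp h.disj15 haA hu5A
            · intro e'
              rw [Set.mem_singleton_iff] at e'
              exact h.side hax heX2 e'
          · rintro y (rfl | rfl)
            · exact hadj_du3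
            · exact hadj_du5
      · -- Yset nonempty: star cutset at d separating Yset from a
        apply star_kill hstar d (G.neighborSet d) (fun y hy => hy)
        have closed : ∀ ⦃z⦄, z ∈ Yset → ∀ ⦃t⦄, t ∈ Sᶜ → G.Adj z t → t ∈ Yset := by
          intro z hz t htW hadj'
          obtain ⟨⟨hzX2, hzbc⟩, hzS⟩ := hz
          have hzb : z ≠ b := fun e => hzbc (by simp [e])
          have hzc : z ≠ c := fun e => hzbc (by simp [e])
          rcases h.cover t with htX1 | htX2
          · exfalso
            rcases h.noOther t htX1 z hzX2 hadj'.symm with ⟨_, h'⟩ | ⟨_, h'⟩ | ⟨_, h'⟩ |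
              ⟨ht3, _⟩ | ⟨ht5, _⟩ | ⟨_, h'⟩
            · exact hzb (by rw [hA2, Set.mem_singleton_iff] at h'; exact h')
            · exact hzc (by rw [hA6, Set.mem_singleton_iff] at h'; exact h')
            · exact hzb (by rw [hA2, Set.mem_singleton_iff] at h'; exact h')
            · rw [hu3, Set.mem_singleton_iff] at ht3
              subst ht3
              exact htW (Or.inr (hadj_du3 : t ∈ G.neighborSet d))
            · rw [hu5, Set.mem_singleton_iff] at ht5
              subst ht5
              exact htW (Or.inr (hadj_du5 : t ∈ G.neighborSet d))
            · exact hzc (by rw [hA6, Set.mem_singleton_iff] at h'; exact h')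
          · refine ⟨⟨htX2, ?_⟩, htW⟩
            rintro (rfl | rfl)
            · exact h.side (hNbX1 z hadj'.symm) hzX2 rfl
            · exact h.side (hNcX1 z hadj'.symm) hzX2 rfl
        refine not_conn (v := a) closed hy0 hy0.2 ?_ ?_
        · apply mem_compl_union (h.side hax hdX2)
          intro hN
          exact h.not_adj_14 haA hdA ((hN : G.Adj d a).symm)
        · intro hY'
          exact h.side hax hY'.1.1 rfl


end Aux
/-- for a 6-join of a bipartite graph with no star cutset that is
4-hole-free or has maximum degree at most 3, all special sets are singletons and all
their vertices have degree at least 3. -/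
theorem stmt6 {V : Type u} [Fintype V] (G : SimpleGraph V)
    (X1 X2 A1 A2 A3 A4 A5 A6 : Set V)
    (hbip : Bipartite G)
    (hsplit : SixJoinSplit G X1 X2 A1 A2 A3 A4 A5 A6)
    (hstar : NoStarCutset G)
    (hcase : FourHoleFree G ∨ ∀ v, deg G v ≤ 3) :
    (A1.ncard = 1 ∧ A2.ncard = 1 ∧ A3.ncard = 1 ∧
     A4.ncard = 1 ∧ A5.ncard = 1 ∧ A6.ncard = 1) ∧
    ∀ v ∈ A1 ∪ A2 ∪ A3 ∪ A4 ∪ A5 ∪ A6, 3 ≤ deg G v := by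
  have s1 := hsplit.rotate
  have s2 := s1.rotate
  have s3 := s2.rotate
  have s4 := s3.rotate
  have s5 := s4.rotate
  have e1 := hsplit.singletonA1 hbip hstar hcase
  have e2 := s1.singletonA1 hbip hstar hcase
  have e3 := s2.singletonA1 hbip hstar hcase
  have e4 := s3.singletonA1 hbip hstar hcase
  have e5 := s4.singletonA1 hbip hstar hcase
  have e6 := s5.singletonA1 hbip hstar hcase
  refine ⟨⟨e1, e2, e3, e4, e5, e6⟩, ?_⟩
  intro v hv
  rcases hv with ((((hm | hm) | hm) | hm) | hm) | hm
  · exact hsplit.degA1 hstar e1 e2 e3 e4 e5 e6 v hm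
  · exact s1.degA1 hstar e2 e3 e4 e5 e6 e1 v hm
  · exact s2.degA1 hstar e3 e4 e5 e6 e1 e2 v hm
  · exact s3.degA1 hstar e4 e5 e6 e1 e2 e3 v hm
  · exact s4.degA1 hstar e5 e6 e1 e2 e3 e4 v hm
  · exact s5.degA1 hstar e6 e1 e2 e3 e4 e5 v hm
end

section
/- Let G be a 4-hole-free bipartite graph with no star cutset, let (X₁,X₂,A₁,...,A₆) be a split of a 6-join of G, and let G₁ = G[X₁ ∪ {a₂,a₄,a₆}] be a block of decomposition (where aᵢ ∈ Aᵢ). Then G₁ has no star cutset. -/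
open SimpleGraph

universe u

variable {V : Type u}

private lemma fin2_eq : ∀ a b c : Fin 2, a ≠ c → b ≠ c → a = b := by decide

set_option maxHeartbeats 1000000 in
private lemma no4 {V : Type u} (G : SimpleGraph V) (h4hf : FourHoleFree G) {p y q z : V}
    (hpy : G.Adj p y) (hyq : G.Adj y q) (hqz : G.Adj q z) (hzp : G.Adj z p)
    (hpq : ¬ G.Adj p q) (hyz : ¬ G.Adj y z) (hpq' : p ≠ q) (hyz' : y ≠ z) : False := by
  classical
  have hpy' : p ≠ y := hpy.ne
  have hyq' : y ≠ q := hyq.ne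
  have hqz' : q ≠ z := hqz.ne
  have hzp' : z ≠ p := hzp.ne
  let c : G.Walk p p := .cons hpy (.cons hyq (.cons hqz (.cons hzp .nil)))
  have hcyc : c.IsCycle := by
    refine ⟨⟨⟨?_⟩, by simp [c]⟩, ?_⟩
    · simp only [c, Walk.edges_cons, Walk.edges_nil, List.nodup_cons, List.mem_cons,
        List.not_mem_nil, or_false, List.mem_singleton, List.nodup_nil, and_true,
        Sym2.eq_iff, not_or]
      refine ⟨⟨?_, ?_, ?_⟩, ⟨?_, ?_⟩, ?_⟩ <;> tauto
    · simp only [c, Walk.support_cons, Walk.support_nil, List.tail_cons, List.nodup_cons,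
        List.mem_cons, List.not_mem_nil, or_false, List.mem_singleton, List.nodup_nil, and_true]
      refine ⟨?_, ?_, ?_⟩ <;> tauto
  have hind : ∀ a b : V, a ∈ c.support → b ∈ c.support → G.Adj a b → s(a, b) ∈ c.edges := by
    intro a b ha hb hab
    simp only [c, Walk.support_cons, Walk.support_nil, List.mem_cons, List.not_mem_nil,
      or_false] at ha hb
    simp only [c, Walk.edges_cons, Walk.edges_nil, List.mem_cons, List.not_mem_nil, or_false,
      Sym2.eq_iff]
    rcases ha with rfl | rfl | rfl | rfl | rfl <;> rcases hb with rfl | rfl | rfl | rfl | rfl <;>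
      first
        | (exact absurd hab (G.loopless.irrefl _))
        | (exact absurd hab hpq)
        | (exact absurd hab hyz)
        | (exact absurd hab (fun h => hpq h.symm))
        | (exact absurd hab (fun h => hyz h.symm))
        | tauto
  exact h4hf p c ⟨hcyc, by simp [c], hind⟩ (by simp [c])

/-- for a 6-join of a 4-hole-free bipartite graph with no star cutset, the
block of decomposition `G₁ = G[X₁ ∪ {a₂, a₄, a₆}]` has no star cutset. -/
theorem stmt7 {V : Type u} [Fintype V] (G : SimpleGraph V)
    (X1 X2 A1 A2 A3 A4 A5 A6 : Set V)
    (hbip : Bipartite G) (h4hf : FourHoleFree G)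
    (hsplit : SixJoinSplit G X1 X2 A1 A2 A3 A4 A5 A6)
    (hstar : NoStarCutset G)
    (a2 a4 a6 : V) (ha2 : a2 ∈ A2) (ha4 : a4 ∈ A4) (ha6 : a6 ∈ A6) :
    NoStarCutset (G.induce (X1 ∪ {a2, a4, a6})) := by
  classical
  obtain ⟨C⟩ := hbip
  have noAdjCommon : ∀ {a b c : V}, G.Adj a c → G.Adj b c → ¬ G.Adj a b := by
    intro a b c hac hbc hab
    exact C.valid hab (fin2_eq _ _ _ (C.valid hac) (C.valid hbc))
  obtain ⟨p1, hp1⟩ := hsplit.ne1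
  obtain ⟨p3, hp3⟩ := hsplit.ne3
  obtain ⟨p5, hp5⟩ := hsplit.ne5
  have dne : ∀ {s t : Set V} {a b : V}, Disjoint s t → a ∈ s → b ∈ t → a ≠ b := by
    intro s t a b hd ha hb h; exact Set.disjoint_left.mp hd ha (h ▸ hb)
  have ne26 : a2 ≠ a6 := dne hsplit.disj26 ha2 ha6
  have ne24 : a2 ≠ a4 := dne hsplit.disj24 ha2 ha4
  have ne46 : a4 ≠ a6 := dne hsplit.disj46 ha4 ha6
  have ne13 : p1 ≠ p3 := dne hsplit.disj13 hp1 hp3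
  have ne15 : p1 ≠ p5 := dne hsplit.disj15 hp1 hp5
  have ne35 : p3 ≠ p5 := dne hsplit.disj35 hp3 hp5
  have hsing : ∀ (Ai Aj Ak : Set V) (yj yk : V), yj ∈ Aj → yk ∈ Ak → yj ≠ yk →
      (∀ a ∈ Ai, ∀ b ∈ Aj, G.Adj a b) → (∀ a ∈ Ai, ∀ b ∈ Ak, G.Adj a b) →
      ∀ w ∈ Ai, ∀ b ∈ Ai, w = b := by
    intro Ai Aj Ak yj yk hyj hyk hnejk hadjj hadjk w hw b hb
    by_contra hwb
    have h1 : G.Adj w yj := hadjj w hw yj hyj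
    have h2 : G.Adj b yj := hadjj b hb yj hyj
    have h3 : G.Adj b yk := hadjk b hb yk hyk
    have h4 : G.Adj w yk := hadjk w hw yk hyk
    exact no4 G h4hf h1 h2.symm h3 h4.symm (noAdjCommon h1 h2)
      (noAdjCommon h1.symm h4.symm) hwb hnejk
  have hA1 : ∀ w ∈ A1, w = p1 := fun w hw =>
    hsing A1 A2 A6 a2 a6 ha2 ha6 ne26 hsplit.adj12
      (fun a ha b hb => (hsplit.adj61 b hb a ha).symm) w hw p1 hp1
  have hA3 : ∀ w ∈ A3, w = p3 := fun w hw =>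
    hsing A3 A2 A4 a2 a4 ha2 ha4 ne24
      (fun a ha b hb => (hsplit.adj23 b hb a ha).symm) hsplit.adj34 w hw p3 hp3
  have hA5 : ∀ w ∈ A5, w = p5 := fun w hw =>
    hsing A5 A4 A6 a4 a6 ha4 ha6 ne46
      (fun a ha b hb => (hsplit.adj45 b hb a ha).symm) hsplit.adj56 w hw p5 hp5
  have hA2 : ∀ w ∈ A2, w = a2 := fun w hw =>
    hsing A2 A1 A3 p1 p3 hp1 hp3 ne13
      (fun a ha b hb => (hsplit.adj12 b hb a ha).symm) hsplit.adj23 w hw a2 ha2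
  have hA4 : ∀ w ∈ A4, w = a4 := fun w hw =>
    hsing A4 A3 A5 p3 p5 hp3 hp5 ne35
      (fun a ha b hb => (hsplit.adj34 b hb a ha).symm) hsplit.adj45 w hw a4 ha4
  have hA6 : ∀ w ∈ A6, w = a6 := fun w hw =>
    hsing A6 A5 A1 p5 p1 hp5 hp1 ne15.symm
      (fun a ha b hb => (hsplit.adj56 b hb a ha).symm) hsplit.adj61 w hw a6 ha6
  have hp1X : p1 ∈ X1 := hsplit.sub1 hp1
  have hp3X : p3 ∈ X1 := hsplit.sub3 hp3
  have hp5X : p5 ∈ X1 := hsplit.sub5 hp5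
  have ha2X : a2 ∈ X2 := hsplit.sub2 ha2
  have ha4X : a4 ∈ X2 := hsplit.sub4 ha4
  have ha6X : a6 ∈ X2 := hsplit.sub6 ha6
  have e12 : G.Adj p1 a2 := hsplit.adj12 p1 hp1 a2 ha2
  have e23 : G.Adj a2 p3 := hsplit.adj23 a2 ha2 p3 hp3
  have e34 : G.Adj p3 a4 := hsplit.adj34 p3 hp3 a4 ha4
  have e45 : G.Adj a4 p5 := hsplit.adj45 a4 ha4 p5 hp5
  have e56 : G.Adj p5 a6 := hsplit.adj56 p5 hp5 a6 ha6
  have e61 : G.Adj a6 p1 := hsplit.adj61 a6 ha6 p1 hp1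
  have n13 : ¬ G.Adj p1 p3 := noAdjCommon e12 e23.symm
  have n35 : ¬ G.Adj p3 p5 := noAdjCommon e34 e45.symm
  have n15 : ¬ G.Adj p1 p5 := noAdjCommon e61.symm e56
  have n24 : ¬ G.Adj a2 a4 := noAdjCommon e23 e34.symm
  have n46 : ¬ G.Adj a4 a6 := noAdjCommon e45 e56.symm
  have n26 : ¬ G.Adj a2 a6 := noAdjCommon e12.symm e61
  have hTedge : ∀ w z : V, w ∈ X1 → z ∈ X2 → G.Adj w z →
      (w = p1 ∧ z = a2) ∨ (w = p1 ∧ z = a6) ∨ (w = p3 ∧ z = a2) ∨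
      (w = p3 ∧ z = a4) ∨ (w = p5 ∧ z = a4) ∨ (w = p5 ∧ z = a6) := by
    intro w z hw hz hadj
    rcases hsplit.noOther w hw z hz hadj with ⟨h1, h2⟩ | ⟨h1, h2⟩ | ⟨h1, h2⟩ | ⟨h1, h2⟩ |
      ⟨h1, h2⟩ | ⟨h1, h2⟩
    · exact Or.inl ⟨hA1 w h1, hA2 z h2⟩
    · exact Or.inr (Or.inl ⟨hA1 w h1, hA6 z h2⟩)
    · exact Or.inr (Or.inr (Or.inl ⟨hA3 w h1, hA2 z h2⟩))
    · exact Or.inr (Or.inr (Or.inr (Or.inl ⟨hA3 w h1, hA4 z h2⟩)))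
    · exact Or.inr (Or.inr (Or.inr (Or.inr (Or.inl ⟨hA5 w h1, hA4 z h2⟩))))
    · exact Or.inr (Or.inr (Or.inr (Or.inr (Or.inr ⟨hA5 w h1, hA6 z h2⟩))))
  set T : Set V := X1 ∪ {a2, a4, a6} with hTdef
  have ha2T : a2 ∈ T := Or.inr (by simp)
  have ha4T : a4 ∈ T := Or.inr (by simp)
  have ha6T : a6 ∈ T := Or.inr (by simp)
  have hp1T : p1 ∈ T := Or.inl hp1X
  have hp3T : p3 ∈ T := Or.inl hp3X
  have hp5T : p5 ∈ T := Or.inl hp5X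
  have hTmem : ∀ {w : V}, w ∈ T → w ∈ X1 ∨ w = a2 ∨ w = a4 ∨ w = a6 := by
    intro w hw
    rcases hw with h | h
    · exact Or.inl h
    · right; simpa using h
  have na2p5 : ¬ G.Adj a2 p5 := by
    intro h
    rcases hTedge p5 a2 hp5X ha2X h.symm with ⟨h1, h2⟩ | ⟨h1, h2⟩ | ⟨h1, h2⟩ | ⟨h1, h2⟩ |
      ⟨h1, h2⟩ | ⟨h1, h2⟩
      <;>
      first
        | exact ne13 h1 | exact ne13 h1.symm | exact ne15 h1 | exact ne15 h1.symm
        | exact ne35 h1 | exact ne35 h1.symm | exact ne24 h2 | exact ne24 h2.symm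
        | exact ne26 h2 | exact ne26 h2.symm | exact ne46 h2 | exact ne46 h2.symm
  have na4p1 : ¬ G.Adj a4 p1 := by
    intro h
    rcases hTedge p1 a4 hp1X ha4X h.symm with ⟨h1, h2⟩ | ⟨h1, h2⟩ | ⟨h1, h2⟩ | ⟨h1, h2⟩ |
      ⟨h1, h2⟩ | ⟨h1, h2⟩
      <;>
      first
        | exact ne13 h1 | exact ne13 h1.symm | exact ne15 h1 | exact ne15 h1.symm
        | exact ne35 h1 | exact ne35 h1.symm | exact ne24 h2 | exact ne24 h2.symm
        | exact ne26 h2 | exact ne26 h2.symm | exact ne46 h2 | exact ne46 h2.symm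
  have na6p3 : ¬ G.Adj a6 p3 := by
    intro h
    rcases hTedge p3 a6 hp3X ha6X h.symm with ⟨h1, h2⟩ | ⟨h1, h2⟩ | ⟨h1, h2⟩ | ⟨h1, h2⟩ |
      ⟨h1, h2⟩ | ⟨h1, h2⟩
      <;>
      first
        | exact ne13 h1 | exact ne13 h1.symm | exact ne15 h1 | exact ne15 h1.symm
        | exact ne35 h1 | exact ne35 h1.symm | exact ne24 h2 | exact ne24 h2.symm
        | exact ne26 h2 | exact ne26 h2.symm | exact ne46 h2 | exact ne46 h2.symm
  intro S hSC
  obtain ⟨⟨x, hxS, hxstar⟩, hdisc⟩ := hSC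
  refine hdisc ?_
  have HAdj : ∀ (a b : ↥((Sᶜ : Set ↥T))), G.Adj a.1.1 b.1.1 →
      ((G.induce T).induce (Sᶜ)).Adj a b := by
    intro a b h; exact h
  have notInS : ∀ (w : V) (hw : w ∈ T), w ≠ ↑x → ¬ G.Adj ↑x w → (⟨w, hw⟩ : ↥T) ∉ S := by
    intro w hw hne hnadj hmem
    rcases hxstar _ hmem with h | h
    · exact hne (congrArg Subtype.val h)
    · exact hnadj h
  have hxadj : ∀ {w : V} (hw : w ∈ T), (⟨w, hw⟩ : ↥T) ∈ S → (↑x : V) = w ∨ G.Adj ↑x w := by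
    intro w hw hmem
    rcases hxstar _ hmem with h | h
    · exact Or.inl (congrArg Subtype.val h).symm
    · exact Or.inr h
  have toV : ∀ (m : ↥((Sᶜ : Set ↥T))) (w : V) (hwT : w ∈ T), m.1.1 = w →
      ∃ (hwS : (⟨w, hwT⟩ : ↥T) ∈ (Sᶜ : Set ↥T)), m = ⟨⟨w, hwT⟩, hwS⟩ := by
    intro m w hwT h
    have h1 : m.1 = ⟨w, hwT⟩ := Subtype.ext h
    exact ⟨h1 ▸ m.2, Subtype.ext h1⟩
  have key : ∃ m0 : ↥((Sᶜ : Set ↥T)), (m0.1.1 = a2 ∨ m0.1.1 = a4 ∨ m0.1.1 = a6) ∧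
      ∀ m : ↥((Sᶜ : Set ↥T)), (m.1.1 = a2 ∨ m.1.1 = a4 ∨ m.1.1 = a6) →
        ((G.induce T).induce (Sᶜ)).Reachable m0 m := by
    rcases hTmem x.2 with hxX1 | hxM
    · -- the centre x of the star is in X1
      have hxne2 : (↑x : V) ≠ a2 := dne hsplit.disj hxX1 ha2X
      have hxne4 : (↑x : V) ≠ a4 := dne hsplit.disj hxX1 ha4X
      have hxne6 : (↑x : V) ≠ a6 := dne hsplit.disj hxX1 ha6X
      have adjxa2 : G.Adj ↑x a2 → ((↑x : V) = p1 ∨ (↑x : V) = p3) := by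
        intro h
        rcases hTedge _ _ hxX1 ha2X h with ⟨h1, h2⟩ | ⟨h1, h2⟩ | ⟨h1, h2⟩ | ⟨h1, h2⟩ |
          ⟨h1, h2⟩ | ⟨h1, h2⟩
        · exact Or.inl h1
        · exact absurd h2 ne26
        · exact Or.inr h1
        · exact absurd h2 ne24
        · exact absurd h2 ne24
        · exact absurd h2 ne26
      have adjxa4 : G.Adj ↑x a4 → ((↑x : V) = p3 ∨ (↑x : V) = p5) := by
        intro h
        rcases hTedge _ _ hxX1 ha4X h with ⟨h1, h2⟩ | ⟨h1, h2⟩ | ⟨h1, h2⟩ | ⟨h1, h2⟩ |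
          ⟨h1, h2⟩ | ⟨h1, h2⟩
        · exact absurd h2 ne24.symm
        · exact absurd h2 ne46
        · exact absurd h2 ne24.symm
        · exact Or.inl h1
        · exact Or.inr h1
        · exact absurd h2 ne46
      have adjxa6 : G.Adj ↑x a6 → ((↑x : V) = p5 ∨ (↑x : V) = p1) := by
        intro h
        rcases hTedge _ _ hxX1 ha6X h with ⟨h1, h2⟩ | ⟨h1, h2⟩ | ⟨h1, h2⟩ | ⟨h1, h2⟩ |
          ⟨h1, h2⟩ | ⟨h1, h2⟩
        · exact absurd h2 ne26.symm
        · exact Or.inr h1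
        · exact absurd h2 ne26.symm
        · exact absurd h2 ne46.symm
        · exact absurd h2 ne46.symm
        · exact Or.inl h1
      have hma2 : (⟨a2, ha2T⟩ : ↥T) ∈ S → ((↑x : V) = p1 ∨ (↑x : V) = p3) := by
        intro hmem
        rcases hxadj ha2T hmem with h | h
        · exact absurd h hxne2
        · exact adjxa2 h
      have hma4 : (⟨a4, ha4T⟩ : ↥T) ∈ S → ((↑x : V) = p3 ∨ (↑x : V) = p5) := by
        intro hmem
        rcases hxadj ha4T hmem with h | h
        · exact absurd h hxne4
        · exact adjxa4 h
      have hma6 : (⟨a6, ha6T⟩ : ↥T) ∈ S → ((↑x : V) = p5 ∨ (↑x : V) = p1) := by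
        intro hmem
        rcases hxadj ha6T hmem with h | h
        · exact absurd h hxne6
        · exact adjxa6 h
      have hu13 : (⟨p1, hp1T⟩ : ↥T) ∈ S → (⟨p3, hp3T⟩ : ↥T) ∈ S → False := by
        intro h1 h3
        rcases hxadj hp1T h1 with e1 | e1 <;> rcases hxadj hp3T h3 with e3 | e3
        · exact ne13 (e1.symm.trans e3)
        · exact n13 (e1 ▸ e3)
        · exact n13 (e3 ▸ e1).symm
        · have hxa2 : ¬ G.Adj ↑x a2 := by
            intro h
            rcases adjxa2 h with e | e
            · exact G.loopless.irrefl _ (e ▸ e1)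
            · exact G.loopless.irrefl _ (e ▸ e3)
          exact no4 G h4hf e1 e12 e23 e3.symm hxa2 n13 hxne2 ne13
      have hu35 : (⟨p3, hp3T⟩ : ↥T) ∈ S → (⟨p5, hp5T⟩ : ↥T) ∈ S → False := by
        intro h3 h5
        rcases hxadj hp3T h3 with e3 | e3 <;> rcases hxadj hp5T h5 with e5 | e5
        · exact ne35 (e3.symm.trans e5)
        · exact n35 (e3 ▸ e5)
        · exact n35 (e5 ▸ e3).symm
        · have hxa4 : ¬ G.Adj ↑x a4 := by
            intro h
            rcases adjxa4 h with e | e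
            · exact G.loopless.irrefl _ (e ▸ e3)
            · exact G.loopless.irrefl _ (e ▸ e5)
          exact no4 G h4hf e3 e34 e45 e5.symm hxa4 n35 hxne4 ne35
      have hu15 : (⟨p1, hp1T⟩ : ↥T) ∈ S → (⟨p5, hp5T⟩ : ↥T) ∈ S → False := by
        intro h1 h5
        rcases hxadj hp1T h1 with e1 | e1 <;> rcases hxadj hp5T h5 with e5 | e5
        · exact ne15 (e1.symm.trans e5)
        · exact n15 (e1 ▸ e5)
        · exact n15 (e5 ▸ e1).symm
        · have hxa6 : ¬ G.Adj ↑x a6 := by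
            intro h
            rcases adjxa6 h with e | e
            · exact G.loopless.irrefl _ (e ▸ e5)
            · exact G.loopless.irrefl _ (e ▸ e1)
          exact no4 G h4hf e1 e61.symm e56.symm e5.symm hxa6 n15 hxne6 ne15
      by_cases h3 : (⟨p3, hp3T⟩ : ↥T) ∈ S
      · have hp1S : (⟨p1, hp1T⟩ : ↥T) ∉ S := fun h => hu13 h h3
        have hp5S : (⟨p5, hp5T⟩ : ↥T) ∉ S := fun h => hu35 h3 h
        have ha6S : (⟨a6, ha6T⟩ : ↥T) ∉ S := by
          intro h
          rcases hma6 h with e | e <;> rcases hxadj hp3T h3 with e3 | e3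
          · exact ne35 (e3.symm.trans e)
          · exact n35 (e ▸ e3).symm
          · exact ne13 (e.symm.trans e3)
          · exact n13 (e ▸ e3)
        refine ⟨⟨⟨a6, ha6T⟩, ha6S⟩, Or.inr (Or.inr rfl), ?_⟩
        intro m hmM
        rcases hmM with h | h | h
        · obtain ⟨hS, rfl⟩ := toV m a2 ha2T h
          exact ((HAdj ⟨⟨a6, ha6T⟩, ha6S⟩ ⟨⟨p1, hp1T⟩, hp1S⟩ e61).reachable.trans
            (HAdj ⟨⟨p1, hp1T⟩, hp1S⟩ ⟨⟨a2, ha2T⟩, hS⟩ e12).reachable)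
        · obtain ⟨hS, rfl⟩ := toV m a4 ha4T h
          exact ((HAdj ⟨⟨a6, ha6T⟩, ha6S⟩ ⟨⟨p5, hp5T⟩, hp5S⟩ e56.symm).reachable.trans
            (HAdj ⟨⟨p5, hp5T⟩, hp5S⟩ ⟨⟨a4, ha4T⟩, hS⟩ e45.symm).reachable)
        · obtain ⟨hS, rfl⟩ := toV m a6 ha6T h
          exact Reachable.refl _
      · by_cases h5 : (⟨p5, hp5T⟩ : ↥T) ∈ S
        · have hp1S : (⟨p1, hp1T⟩ : ↥T) ∉ S := fun h => hu15 h h5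
          have ha2S : (⟨a2, ha2T⟩ : ↥T) ∉ S := by
            intro h
            rcases hma2 h with e | e <;> rcases hxadj hp5T h5 with e5 | e5
            · exact ne15 (e.symm.trans e5)
            · exact n15 (e ▸ e5)
            · exact ne35 (e.symm.trans e5)
            · exact n35 (e ▸ e5)
          refine ⟨⟨⟨a2, ha2T⟩, ha2S⟩, Or.inl rfl, ?_⟩
          intro m hmM
          rcases hmM with h | h | h
          · obtain ⟨hS, rfl⟩ := toV m a2 ha2T h; exact Reachable.refl _
          · obtain ⟨hS, rfl⟩ := toV m a4 ha4T h
            exact ((HAdj ⟨⟨a2, ha2T⟩, ha2S⟩ ⟨⟨p3, hp3T⟩, h3⟩ e23).reachable.trans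
              (HAdj ⟨⟨p3, hp3T⟩, h3⟩ ⟨⟨a4, ha4T⟩, hS⟩ e34).reachable)
          · obtain ⟨hS, rfl⟩ := toV m a6 ha6T h
            exact ((HAdj ⟨⟨a2, ha2T⟩, ha2S⟩ ⟨⟨p1, hp1T⟩, hp1S⟩ e12.symm).reachable.trans
              (HAdj ⟨⟨p1, hp1T⟩, hp1S⟩ ⟨⟨a6, ha6T⟩, hS⟩ e61.symm).reachable)
        · have ha4S : (⟨a4, ha4T⟩ : ↥T) ∉ S := by
            intro h
            rcases hma4 h with e | e
            · exact h3 (by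
                have hxe : x = (⟨p3, hp3T⟩ : ↥T) := Subtype.ext e
                exact hxe ▸ hxS)
            · exact h5 (by
                have hxe : x = (⟨p5, hp5T⟩ : ↥T) := Subtype.ext e
                exact hxe ▸ hxS)
          refine ⟨⟨⟨a4, ha4T⟩, ha4S⟩, Or.inr (Or.inl rfl), ?_⟩
          intro m hmM
          rcases hmM with h | h | h
          · obtain ⟨hS, rfl⟩ := toV m a2 ha2T h
            exact ((HAdj ⟨⟨a4, ha4T⟩, ha4S⟩ ⟨⟨p3, hp3T⟩, h3⟩ e34.symm).reachable.trans
              (HAdj ⟨⟨p3, hp3T⟩, h3⟩ ⟨⟨a2, ha2T⟩, hS⟩ e23.symm).reachable)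
          · obtain ⟨hS, rfl⟩ := toV m a4 ha4T h; exact Reachable.refl _
          · obtain ⟨hS, rfl⟩ := toV m a6 ha6T h
            exact ((HAdj ⟨⟨a4, ha4T⟩, ha4S⟩ ⟨⟨p5, hp5T⟩, h5⟩ e45).reachable.trans
              (HAdj ⟨⟨p5, hp5T⟩, h5⟩ ⟨⟨a6, ha6T⟩, hS⟩ e56).reachable)
    · -- the centre x of the star is one of the markers
      rcases hxM with hx | hx | hx
      · -- x = a2 : hub a4, spine a4 - p5 - a6
        have hp5S : (⟨p5, hp5T⟩ : ↥T) ∉ S :=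
          notInS p5 hp5T (fun h => dne hsplit.disj hp5X ha2X (h.trans hx))
            (by rw [hx]; exact na2p5)
        have ha4S : (⟨a4, ha4T⟩ : ↥T) ∉ S :=
          notInS a4 ha4T (fun h => ne24 (h.trans hx).symm) (by rw [hx]; exact n24)
        have ha6S : (⟨a6, ha6T⟩ : ↥T) ∉ S :=
          notInS a6 ha6T (fun h => ne26 (h.trans hx).symm) (by rw [hx]; exact n26)
        refine ⟨⟨⟨a4, ha4T⟩, ha4S⟩, Or.inr (Or.inl rfl), ?_⟩
        intro m hmM
        rcases hmM with h | h | h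
        · obtain ⟨hS, rfl⟩ := toV m a2 ha2T h
          have hxe : x = (⟨a2, ha2T⟩ : ↥T) := Subtype.ext hx
          exact absurd (hxe ▸ hxS) hS
        · obtain ⟨hS, rfl⟩ := toV m a4 ha4T h; exact Reachable.refl _
        · obtain ⟨hS, rfl⟩ := toV m a6 ha6T h
          exact ((HAdj ⟨⟨a4, ha4T⟩, ha4S⟩ ⟨⟨p5, hp5T⟩, hp5S⟩ e45).reachable.trans
            (HAdj ⟨⟨p5, hp5T⟩, hp5S⟩ ⟨⟨a6, ha6T⟩, hS⟩ e56).reachable)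
      · -- x = a4 : hub a2, spine a2 - p1 - a6
        have hp1S : (⟨p1, hp1T⟩ : ↥T) ∉ S :=
          notInS p1 hp1T (fun h => dne hsplit.disj hp1X ha4X (h.trans hx))
            (by rw [hx]; exact na4p1)
        have ha2S : (⟨a2, ha2T⟩ : ↥T) ∉ S :=
          notInS a2 ha2T (fun h => ne24 (h.trans hx)) (by rw [hx]; exact fun hh => n24 hh.symm)
        have ha6S : (⟨a6, ha6T⟩ : ↥T) ∉ S :=
          notInS a6 ha6T (fun h => ne46 (h.trans hx).symm) (by rw [hx]; exact n46)
        refine ⟨⟨⟨a2, ha2T⟩, ha2S⟩, Or.inl rfl, ?_⟩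
        intro m hmM
        rcases hmM with h | h | h
        · obtain ⟨hS, rfl⟩ := toV m a2 ha2T h; exact Reachable.refl _
        · obtain ⟨hS, rfl⟩ := toV m a4 ha4T h
          have hxe : x = (⟨a4, ha4T⟩ : ↥T) := Subtype.ext hx
          exact absurd (hxe ▸ hxS) hS
        · obtain ⟨hS, rfl⟩ := toV m a6 ha6T h
          exact ((HAdj ⟨⟨a2, ha2T⟩, ha2S⟩ ⟨⟨p1, hp1T⟩, hp1S⟩ e12.symm).reachable.trans
            (HAdj ⟨⟨p1, hp1T⟩, hp1S⟩ ⟨⟨a6, ha6T⟩, hS⟩ e61.symm).reachable)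
      · -- x = a6 : hub a2, spine a2 - p3 - a4
        have hp3S : (⟨p3, hp3T⟩ : ↥T) ∉ S :=
          notInS p3 hp3T (fun h => dne hsplit.disj hp3X ha6X (h.trans hx))
            (by rw [hx]; exact na6p3)
        have ha2S : (⟨a2, ha2T⟩ : ↥T) ∉ S :=
          notInS a2 ha2T (fun h => ne26 (h.trans hx)) (by rw [hx]; exact fun hh => n26 hh.symm)
        have ha4S : (⟨a4, ha4T⟩ : ↥T) ∉ S :=
          notInS a4 ha4T (fun h => ne46 (h.trans hx)) (by rw [hx]; exact fun hh => n46 hh.symm)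
        refine ⟨⟨⟨a2, ha2T⟩, ha2S⟩, Or.inl rfl, ?_⟩
        intro m hmM
        rcases hmM with h | h | h
        · obtain ⟨hS, rfl⟩ := toV m a2 ha2T h; exact Reachable.refl _
        · obtain ⟨hS, rfl⟩ := toV m a4 ha4T h
          exact ((HAdj ⟨⟨a2, ha2T⟩, ha2S⟩ ⟨⟨p3, hp3T⟩, hp3S⟩ e23).reachable.trans
            (HAdj ⟨⟨p3, hp3T⟩, hp3S⟩ ⟨⟨a4, ha4T⟩, hS⟩ e34).reachable)
        · obtain ⟨hS, rfl⟩ := toV m a6 ha6T h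
          have hxe : x = (⟨a6, ha6T⟩ : ↥T) := Subtype.ext hx
          exact absurd (hxe ▸ hxS) hS
  obtain ⟨m0, hm0M, hm0R⟩ := key
  have reachMark : ∀ w : ↥((Sᶜ : Set ↥T)), ∃ m : ↥((Sᶜ : Set ↥T)),
      (m.1.1 = a2 ∨ m.1.1 = a4 ∨ m.1.1 = a6) ∧
        ((G.induce T).induce (Sᶜ)).Reachable w m := by
    intro w
    by_contra hno
    push_neg at hno
    refine hstar (Subtype.val '' S) ⟨⟨(↑x : V), ⟨x, hxS, rfl⟩, ?_⟩, ?_⟩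
    · rintro z ⟨y, hyS, rfl⟩
      rcases hxstar y hyS with h | h
      · exact Or.inl (congrArg Subtype.val h)
      · exact Or.inr h
    · intro hconn
      have hX2big : ¬ X2 ⊆ {a2, a4, a6} := by
        intro hsub
        have h1 := Set.ncard_le_ncard hsub (Set.toFinite _)
        have i1 := Set.ncard_insert_le a2 ({a4, a6} : Set V)
        have i2 := Set.ncard_insert_le a4 ({a6} : Set V)
        have i3 : ({a6} : Set V).ncard = 1 := Set.ncard_singleton a6
        have hc2 := hsplit.card2
        omega
      obtain ⟨z0, hz0X2, hz0M⟩ := Set.not_subset.mp hX2big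
      have hz0T : z0 ∉ T := by
        intro h
        rcases hTmem h with h' | h'
        · exact Set.disjoint_left.mp hsplit.disj h' hz0X2
        · exact hz0M (by rcases h' with h' | h' | h' <;> simp [h'])
      have hz0S : z0 ∉ Subtype.val '' S := by
        rintro ⟨y, hyS, rfl⟩
        exact hz0T y.2
      have hwS : (w.1.1 : V) ∉ Subtype.val '' S := by
        rintro ⟨y, hyS, heq⟩
        have hyw : y = w.1 := Subtype.ext heq
        exact w.2 (hyw ▸ hyS)
      obtain ⟨pw⟩ := hconn.preconnected ⟨w.1.1, hwS⟩ ⟨z0, hz0S⟩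
      let P : V → Prop := fun cv =>
        ∃ (h1 : cv ∈ T) (h2 : (⟨cv, h1⟩ : ↥T) ∉ S),
          ((G.induce T).induce (Sᶜ)).Reachable w ⟨⟨cv, h1⟩, h2⟩
      have hstep : ∀ (c d : ↥(((Subtype.val '' S)ᶜ : Set V))),
          (G.induce ((Subtype.val '' S)ᶜ)).Adj c d → P c.1 → P d.1 := by
        intro c d hcd hc
        obtain ⟨h1, h2, hr⟩ := hc
        have hGcd : G.Adj c.1 d.1 := hcd
        rcases hTmem h1 with hcX1 | hcM
        · have hdT : d.1 ∈ T := by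
            rcases hsplit.cover d.1 with hdX1 | hdX2
            · exact Or.inl hdX1
            · rcases hTedge c.1 d.1 hcX1 hdX2 hGcd with ⟨_, h'⟩ | ⟨_, h'⟩ | ⟨_, h'⟩ |
                ⟨_, h'⟩ | ⟨_, h'⟩ | ⟨_, h'⟩ <;> (right; simp [h'])
          have hdS : (⟨d.1, hdT⟩ : ↥T) ∉ S := fun hmem => d.2 ⟨⟨d.1, hdT⟩, hmem, rfl⟩
          exact ⟨hdT, hdS,
            hr.trans (HAdj ⟨⟨c.1, h1⟩, h2⟩ ⟨⟨d.1, hdT⟩, hdS⟩ hGcd).reachable⟩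
        · exact absurd hr (hno ⟨⟨c.1, h1⟩, h2⟩ hcM)
      have hwalk : ∀ (c d : ↥(((Subtype.val '' S)ᶜ : Set V)))
          (p : (G.induce ((Subtype.val '' S)ᶜ)).Walk c d), P c.1 → P d.1 := by
        intro c d p
        induction p with
        | nil => exact id
        | cons h q ih => exact fun hc => ih (hstep _ _ h hc)
      have hPw : P w.1.1 := ⟨w.1.2, w.2, Reachable.refl w⟩
      obtain ⟨h1, -, -⟩ := hwalk _ _ pw hPw
      exact hz0T h1
  rw [connected_iff]
  refine ⟨?_, ⟨m0⟩⟩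
  intro a b
  obtain ⟨ma, hmaM, hra⟩ := reachMark a
  obtain ⟨mb, hmbM, hrb⟩ := reachMark b
  exact (hra.trans ((hm0R ma hmaM).symm.trans (hm0R mb hmbM))).trans hrb.symm
end
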